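/- arXiv:1904.11328 — 4 statements merged into one kernel-verified Lean document; each statement's English description precedes it below -/
import Mathlib

section
/- Let α > -1/2, m ∈ ℕ, m ≥ 1, and define ψ_m(λ) = (-1)^m ( j_α(λ) - Σ_{k=0}^{m-1} (-1)^k Γ(α+1)(λ/2)^{2k}/(k! Γ(k+α+1)) ). Then ψ_m(λ) ≥ 0 for all λ ≥ 0. -/
open FormalMultilinearSeries in
lemma hasDerivAt_tsum_pow (c : ℕ → ℝ)
    (hs : ∀ r : NNReal, Summable fun n : ℕ ↦ |c n| * (r : ℝ) ^ n) (x : ℝ) :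
    HasDerivAt (fun y : ℝ => ∑' n, c n * y ^ n)
      (∑' n : ℕ, ((n : ℝ) + 1) * c (n + 1) * x ^ n) x := by
  set p := ofScalars ℝ c with hp
  have hnorm : ∀ n, ‖p n‖ = |c n| := fun n => by
    simpa [hp] using ofScalars_norm ℝ c n
  have hrad : p.radius = ⊤ :=
    p.radius_eq_top_of_summable_norm (fun r => by simpa [hnorm] using hs r)
  have hball : HasFPowerSeriesOnBall p.sum p 0 ⊤ := by
    have h := p.hasFPowerSeriesOnBall (by rw [hrad]; exact ENNReal.zero_lt_top)
    rwa [hrad] at h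
  have hfun : (fun y : ℝ => ∑' n, c n * y ^ n) = p.sum := by
    funext y
    exact (tsum_congr fun n => by rw [ofScalars_apply_eq, smul_eq_mul]).symm
  rw [hfun]
  rcases eq_or_ne x 0 with rfl | hx
  · have h0 : HasDerivAt p.sum (p 1 fun _ ↦ 1) 0 :=
      hball.hasFPowerSeriesAt.hasDerivAt
    have hv : (p 1 fun _ ↦ (1:ℝ)) = c 1 := by
      rw [hp, ofScalars_apply_eq]; simp
    have ht : (∑' n : ℕ, ((n : ℝ) + 1) * c (n + 1) * (0:ℝ) ^ n) = c 1 := by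
      rw [tsum_eq_single 0 (fun n hn => by simp [zero_pow hn])]; simp
    rw [ht]; rw [hv] at h0; exact h0
  · have hmem : (‖x‖₊ : ENNReal) < ⊤ := ENNReal.coe_lt_top
    have hd : HasDerivAt p.sum ((fderiv ℝ p.sum x) 1) x := by
      have h1 := (hball.hasFDerivAt (y := x) hmem).hasDerivAt
      rw [← hball.fderiv_eq hmem] at h1
      simpa using h1
    have hmem2 : x ∈ Metric.eball (0 : ℝ) ⊤ := by simp
    have hsum1 : HasSum (fun n ↦ p.derivSeries n fun _ ↦ x) (fderiv ℝ p.sum (0 + x)) :=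
      hball.fderiv.hasSum hmem2
    have hsum2 := (ContinuousLinearMap.apply ℝ ℝ (1 : ℝ)).hasSum hsum1
    simp only [ContinuousLinearMap.apply_apply] at hsum2
    have hterm : ∀ n : ℕ, (p.derivSeries n fun _ ↦ x) 1 = ((n : ℝ) + 1) * c (n + 1) * x ^ n := by
      intro n
      have h1 : (p.derivSeries n fun _ ↦ x) 1 = x⁻¹ • ((p.derivSeries n fun _ ↦ x) x) := by
        conv_lhs => rw [show (1:ℝ) = x⁻¹ • x from by simp [smul_eq_mul, inv_mul_cancel₀ hx]]
        exact map_smul _ _ _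
      rw [h1, p.derivSeries_apply_diag, ofScalars_apply_eq]
      simp only [smul_eq_mul, nsmul_eq_mul]
      rw [pow_succ]
      push_cast
      field_simp
    have := hsum2.tsum_eq
    simp_rw [hterm] at this
    rw [this]
    simpa using hd

open Finset

/-- The normalized Bessel function `j_α`, given by its power series. -/
noncomputable def besselJ (α : ℝ) (x : ℝ) : ℝ :=
  ∑' k : ℕ, (-1 : ℝ) ^ k * Real.Gamma (α + 1) * (x / 2) ^ (2 * k) /
    ((Nat.factorial k : ℝ) * Real.Gamma ((k : ℝ) + α + 1))

namespace BesselTail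

noncomputable def bb (α : ℝ) (k : ℕ) : ℝ :=
  (-1) ^ k * Real.Gamma (α + 1) / (4 ^ k * (Nat.factorial k : ℝ) * Real.Gamma ((k : ℝ) + α + 1))

lemma gamma_arg_pos (α : ℝ) (hα : -1 < α) (k : ℕ) : (0:ℝ) < (k : ℝ) + α + 1 := by
  have : (0:ℝ) ≤ (k:ℝ) := Nat.cast_nonneg k
  linarith

lemma gamma_pos (α : ℝ) (hα : -1 < α) (k : ℕ) : 0 < Real.Gamma ((k : ℝ) + α + 1) :=
  Real.Gamma_pos_of_pos (gamma_arg_pos α hα k)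

lemma term_eq (α : ℝ) (hα : -1 < α) (x : ℝ) (k : ℕ) :
    (-1 : ℝ) ^ k * Real.Gamma (α + 1) * (x / 2) ^ (2 * k) /
      ((Nat.factorial k : ℝ) * Real.Gamma ((k : ℝ) + α + 1)) = bb α k * x ^ (2 * k) := by
  have h1 : ((x / 2) ^ (2 * k) : ℝ) = x ^ (2 * k) / 4 ^ k := by
    rw [div_pow]
    congr 1
    rw [pow_mul]; norm_num
  have h2 : Real.Gamma ((k : ℝ) + α + 1) ≠ 0 := (gamma_pos α hα k).ne'
  have h3 : ((Nat.factorial k : ℝ)) ≠ 0 := by exact_mod_cast (Nat.factorial_pos k).ne'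
  have h4 : ((4:ℝ) ^ k) ≠ 0 := by positivity
  rw [bb, h1]
  field_simp

lemma bb_zero (α : ℝ) (hα : -1 < α) : bb α 0 = 1 := by
  have h2 : Real.Gamma (α + 1) ≠ 0 :=
    (Real.Gamma_pos_of_pos (by linarith : (0:ℝ) < α + 1)).ne'
  simp [bb, h2]

lemma bb_succ (α : ℝ) (hα : -1 < α) (k : ℕ) :
    bb α (k + 1) = -bb α k / (4 * ((k : ℝ) + 1) * ((k : ℝ) + α + 1)) := by
  have hne : ((k : ℝ) + α + 1) ≠ 0 := (gamma_arg_pos α hα k).ne'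
  have hΓ : Real.Gamma (((k + 1 : ℕ) : ℝ) + α + 1)
      = ((k : ℝ) + α + 1) * Real.Gamma ((k : ℝ) + α + 1) := by
    push_cast
    rw [show (k : ℝ) + 1 + α + 1 = ((k : ℝ) + α + 1) + 1 by ring, Real.Gamma_add_one hne]
  have h2 : Real.Gamma ((k : ℝ) + α + 1) ≠ 0 := (gamma_pos α hα k).ne'
  have h3 : ((Nat.factorial k : ℝ)) ≠ 0 := by exact_mod_cast (Nat.factorial_pos k).ne'
  have h4 : ((4:ℝ) ^ k) ≠ 0 := by positivity
  have h5 : ((k:ℝ) + 1) ≠ 0 := by positivity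
  rw [bb, bb, hΓ, Nat.factorial_succ, pow_succ _ k]
  push_cast
  field_simp
  ring_nf

lemma bb_alpha_succ (α : ℝ) (hα : -1 < α) (k : ℕ) :
    bb (α + 1) k = bb α k * (α + 1) / ((k : ℝ) + α + 1) := by
  have hne : ((k : ℝ) + α + 1) ≠ 0 := (gamma_arg_pos α hα k).ne'
  have hα1 : (α + 1) ≠ 0 := by linarith
  have hΓ1 : Real.Gamma (α + 1 + 1) = (α + 1) * Real.Gamma (α + 1) := Real.Gamma_add_one hα1
  have hΓ2 : Real.Gamma ((k : ℝ) + (α + 1) + 1)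
      = ((k : ℝ) + α + 1) * Real.Gamma ((k : ℝ) + α + 1) := by
    rw [show (k : ℝ) + (α + 1) + 1 = ((k : ℝ) + α + 1) + 1 by ring, Real.Gamma_add_one hne]
  have h2 : Real.Gamma ((k : ℝ) + α + 1) ≠ 0 := (gamma_pos α hα k).ne'
  have h3 : ((Nat.factorial k : ℝ)) ≠ 0 := by exact_mod_cast (Nat.factorial_pos k).ne'
  have h4 : ((4:ℝ) ^ k) ≠ 0 := by positivity
  rw [bb, bb, hΓ1, hΓ2]
  field_simp

lemma summable_norm_bb (α : ℝ) (hα : -1 < α) (x : ℝ) :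
    Summable (fun k : ℕ ↦ ‖bb α k * x ^ (2 * k)‖) := by
  apply summable_of_ratio_norm_eventually_le (r := 1/2) (by norm_num)
  have hev : ∀ᶠ k : ℕ in Filter.atTop, x ^ 2 ≤ (k : ℝ) + 1 ∧ 1 ≤ (k : ℝ) + α + 1 := by
    filter_upwards [Filter.eventually_ge_atTop (⌈x ^ 2⌉₊),
      Filter.eventually_ge_atTop (⌈-α⌉₊)] with k h1 h2
    constructor
    · calc x ^ 2 ≤ (⌈x ^ 2⌉₊ : ℝ) := Nat.le_ceil _
        _ ≤ (k : ℝ) := by exact_mod_cast h1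
        _ ≤ (k : ℝ) + 1 := by linarith
    · have ha : -α ≤ (⌈-α⌉₊ : ℝ) := Nat.le_ceil _
      have h2' : ((⌈-α⌉₊ : ℕ) : ℝ) ≤ (k:ℝ) := by exact_mod_cast h2
      linarith
  filter_upwards [hev] with k hk
  obtain ⟨h1, h2⟩ := hk
  rw [norm_norm, norm_norm]
  have hkpos : (0:ℝ) < (k : ℝ) + α + 1 := by linarith
  have e : bb α (k+1) * x ^ (2 * (k+1))
      = (bb α k * x ^ (2*k)) * (-(x^2) / (4 * ((k : ℝ) + 1) * ((k : ℝ) + α + 1))) := by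
    rw [bb_succ α hα k, show 2*(k+1) = 2*k + 2 by ring, pow_add]
    ring
  rw [e, norm_mul]
  have hb : ‖-(x^2) / (4 * ((k : ℝ) + 1) * ((k : ℝ) + α + 1))‖ ≤ 1/2 := by
    have hD : (0:ℝ) < 4 * ((k : ℝ) + 1) * ((k : ℝ) + α + 1) := by positivity
    rw [norm_div, norm_neg, Real.norm_of_nonneg (by positivity : (0:ℝ) ≤ x^2),
      Real.norm_of_nonneg hD.le, div_le_iff₀ hD]
    nlinarith [sq_nonneg x]
  calc ‖bb α k * x ^ (2*k)‖ * ‖-(x^2) / (4 * ((k : ℝ) + 1) * ((k : ℝ) + α + 1))‖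
      ≤ ‖bb α k * x ^ (2*k)‖ * (1/2) :=
        mul_le_mul_of_nonneg_left hb (norm_nonneg _)
    _ = 1/2 * ‖bb α k * x ^ (2*k)‖ := by ring

lemma summable_bb (α : ℝ) (hα : -1 < α) (x : ℝ) :
    Summable (fun k : ℕ ↦ bb α k * x ^ (2 * k)) :=
  (summable_norm_bb α hα x).of_norm

lemma besselJ_eq (α : ℝ) (hα : -1 < α) (x : ℝ) :
    besselJ α x = ∑' k : ℕ, bb α k * x ^ (2 * k) := by
  rw [besselJ]
  exact tsum_congr fun k => term_eq α hα x k


noncomputable def cc (α : ℝ) (n : ℕ) : ℝ := if Even n then bb α (n / 2) else 0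

lemma cc_two_mul (α : ℝ) (k : ℕ) : cc α (2 * k) = bb α k := by
  rw [cc, if_pos (even_two_mul k)]
  congr 1
  omega

lemma cc_odd (α : ℝ) (n : ℕ) (h : ¬ Even n) : cc α n = 0 := if_neg h

lemma hinj : Function.Injective (fun k : ℕ => 2 * k) := fun a b h => by simp only at h; omega

lemma hinj' : Function.Injective (fun k : ℕ => 2 * k + 1) := fun a b h => by simp only at h; omega

lemma summable_cc (α : ℝ) (hα : -1 < α) (r : NNReal) :
    Summable (fun n : ℕ ↦ |cc α n| * (r : ℝ) ^ n) := by
  have hzero : ∀ n ∉ Set.range (fun k : ℕ => 2 * k), |cc α n| * (r:ℝ) ^ n = 0 := by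
    intro n hn
    have hodd : ¬ Even n := by
      intro he
      obtain ⟨m, hm⟩ := he
      exact hn ⟨m, show 2 * m = n by omega⟩
    rw [cc_odd α n hodd]
    simp
  rw [← Function.Injective.summable_iff hinj hzero]
  have he : ((fun n : ℕ => |cc α n| * (r:ℝ) ^ n) ∘ (fun k : ℕ => 2 * k))
      = fun k : ℕ => ‖bb α k * (r:ℝ) ^ (2 * k)‖ := by
    funext k
    simp only [Function.comp_apply, cc_two_mul]
    rw [norm_mul, Real.norm_eq_abs, Real.norm_eq_abs, abs_pow, abs_of_nonneg (r.coe_nonneg)]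
  rw [he]
  exact summable_norm_bb α hα r

lemma besselJ_eq_ps (α : ℝ) (hα : -1 < α) (x : ℝ) :
    besselJ α x = ∑' n : ℕ, cc α n * x ^ n := by
  rw [besselJ_eq α hα x]
  have hzero : Function.support (fun n : ℕ => cc α n * x ^ n)
      ⊆ Set.range (fun k : ℕ => 2 * k) := by
    intro n hn
    by_contra h
    apply hn
    have hodd : ¬ Even n := by
      intro he
      obtain ⟨m, hm⟩ := he
      exact h ⟨m, show 2 * m = n by omega⟩
    simp [cc_odd α n hodd]
  rw [← Function.Injective.tsum_eq hinj hzero]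
  exact tsum_congr fun k => by simp [cc_two_mul]

lemma besselJ_hasDerivAt (α : ℝ) (hα : -1 < α) (x : ℝ) :
    HasDerivAt (besselJ α) (-(x / (2 * (α + 1))) * besselJ (α + 1) x) x := by
  have h := hasDerivAt_tsum_pow (cc α) (fun r => summable_cc α hα r) x
  have hfun : besselJ α = fun y => ∑' n : ℕ, cc α n * y ^ n :=
    funext fun y => besselJ_eq_ps α hα y
  rw [hfun]
  convert h using 1
  have hα1 : -1 < α + 1 := by linarith
  rw [besselJ_eq (α+1) hα1 x, ← tsum_mul_left]
  have hzero : Function.support (fun n : ℕ => ((n:ℝ) + 1) * cc α (n + 1) * x ^ n)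
      ⊆ Set.range (fun k : ℕ => 2 * k + 1) := by
    intro n hn
    by_contra h'
    apply hn
    have hodd : ¬ Even (n + 1) := by
      intro he
      obtain ⟨m, hm⟩ := he
      exact h' ⟨m - 1, show 2 * (m-1) + 1 = n by omega⟩
    simp [cc_odd α (n+1) hodd]
  rw [← Function.Injective.tsum_eq hinj' hzero]
  apply tsum_congr
  intro k
  have hne : ((k : ℝ) + α + 1) ≠ 0 := (gamma_arg_pos α hα k).ne'
  have hα1' : (α + 1) ≠ 0 := by linarith
  have hcc : cc α (2 * k + 1 + 1) = bb α (k + 1) := by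
    rw [show 2 * k + 1 + 1 = 2 * (k + 1) by ring, cc_two_mul]
  rw [hcc, bb_succ α hα k, bb_alpha_succ α hα k]
  push_cast
  have h5 : ((k:ℝ) + 1) ≠ 0 := by positivity
  field_simp
  ring
lemma besselJ_zero (α : ℝ) (hα : -1 < α) : besselJ α 0 = 1 := by
  rw [besselJ_eq α hα 0, tsum_eq_single 0 (fun k hk => by
    rw [zero_pow (by omega : 2 * k ≠ 0), mul_zero])]
  rw [bb_zero α hα]
  norm_num

lemma besselJ_sub (α : ℝ) (hα : -1 < α) (x : ℝ) :
    besselJ α x - besselJ (α+1) x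
      = -(x^2 / (4*(α+1)*(α+2))) * besselJ (α+2) x := by
  have hα1 : -1 < α + 1 := by linarith
  have hα2 : -1 < α + 2 := by linarith
  rw [besselJ_eq α hα x, besselJ_eq (α+1) hα1 x,
    ← Summable.tsum_sub (summable_bb α hα x) (summable_bb (α+1) hα1 x)]
  have hsum : Summable (fun k : ℕ => (bb α k - bb (α+1) k) * x ^ (2*k)) := by
    have := (summable_bb α hα x).sub (summable_bb (α+1) hα1 x)
    apply this.congr
    intro k
    ring
  calc ∑' k : ℕ, (bb α k * x ^ (2*k) - bb (α+1) k * x ^ (2*k))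
      = ∑' k : ℕ, (bb α k - bb (α+1) k) * x ^ (2*k) := tsum_congr fun k => by ring
    _ = (bb α 0 - bb (α+1) 0) * x ^ (2*0)
        + ∑' k : ℕ, (bb α (k+1) - bb (α+1) (k+1)) * x ^ (2*(k+1)) := Summable.tsum_eq_zero_add hsum
    _ = ∑' k : ℕ, -(x^2/(4*(α+1)*(α+2))) * (bb (α+2) k * x ^ (2*k)) := by
        rw [bb_zero α hα, bb_zero (α+1) hα1]
        simp only [sub_self, zero_mul, zero_add]
        apply tsum_congr
        intro k
        have hne : ((k : ℝ) + α + 1) ≠ 0 := (gamma_arg_pos α hα k).ne'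
        have hne2 : ((k : ℝ) + α + 2) ≠ 0 := by
          have := gamma_arg_pos (α+1) hα1 k
          intro hc
          rw [show (k:ℝ) + α + 2 = (k:ℝ) + (α+1) + 1 by ring] at hc
          exact this.ne' hc
        have hα1' : (α + 1) ≠ 0 := by linarith
        have hα2' : (α + 2) ≠ 0 := by linarith
        have h5 : ((k:ℝ) + 1) ≠ 0 := by positivity
        have hb2 : bb (α+1) (k+1) = bb α (k+1) * (α+1) / (((k+1:ℕ):ℝ)+α+1) :=
          bb_alpha_succ α hα (k+1)
        push_cast at hb2
        rw [show (k:ℝ)+1+α+1 = (k:ℝ)+α+2 by ring] at hb2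
        have hb3 : bb (α+2) k = bb (α+1) k * (α+2) / ((k:ℝ)+α+2) := by
          have := bb_alpha_succ (α+1) hα1 k
          rw [show α + 1 + 1 = α + 2 by ring, show (k:ℝ)+(α+1)+1 = (k:ℝ)+α+2 by ring] at this
          exact this
        have hb4 : bb (α+1) k = bb α k * (α+1)/((k:ℝ)+α+1) := bb_alpha_succ α hα k
        have hb1 : bb α (k+1) = -bb α k / (4*((k:ℝ)+1)*((k:ℝ)+α+1)) := bb_succ α hα k
        rw [hb2, hb1, hb3, hb4, show 2*(k+1) = 2*k+2 by ring, pow_add]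
        field_simp
        ring
    _ = -(x^2/(4*(α+1)*(α+2))) * besselJ (α+2) x := by
        rw [tsum_mul_left, besselJ_eq (α+2) hα2 x]

lemma besselJ_deriv2 (α : ℝ) (hα : -1 < α) (x : ℝ) :
    HasDerivAt (fun t => -(t / (2*(α+1))) * besselJ (α+1) t)
      (-(1/(2*(α+1))) * besselJ (α+1) x
        + -(x/(2*(α+1))) * (-(x/(2*(α+2))) * besselJ (α+2) x)) x := by
  have h1 : HasDerivAt (fun t : ℝ => -(t / (2*(α+1)))) (-(1/(2*(α+1)))) x := by
    exact ((hasDerivAt_id' x).div_const (2*(α+1))).neg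
  have h2 := besselJ_hasDerivAt (α+1) (by linarith) x
  rw [show α + 1 + 1 = α + 2 by ring] at h2
  exact h1.mul h2

lemma ener_hasDerivAt (α : ℝ) (hα : -1 < α) (t : ℝ) :
    HasDerivAt (fun u : ℝ => besselJ α u ^ 2 + (-(u/(2*(α+1))) * besselJ (α+1) u) ^ 2)
      (-(t * (2*α+1) / (2*(α+1)^2)) * besselJ (α+1) t ^ 2) t := by
  have h1 := (besselJ_hasDerivAt α hα t).pow 2
  have h2 := (besselJ_deriv2 α hα t).pow 2
  have h3 := h1.add h2
  convert h3 using 1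
  · rfl
  · rfl
  · rfl
  have hsub := besselJ_sub α hα t
  have hj : besselJ α t = besselJ (α+1) t - t^2/(4*(α+1)*(α+2)) * besselJ (α+2) t := by
    nlinarith [hsub]
  rw [hj]
  have hα1' : (α + 1) ≠ 0 := by linarith
  have hα2' : (α + 2) ≠ 0 := by linarith
  push_cast
  field_simp
  ring

lemma besselJ_le_one (α : ℝ) (hα2 : -1/2 < α) (x : ℝ) (hx : 0 ≤ x) : besselJ α x ≤ 1 := by
  have hα : -1 < α := by linarith
  have hder := fun t => ener_hasDerivAt α hα t
  have hanti : AntitoneOn (fun u : ℝ => besselJ α u ^ 2 + (-(u/(2*(α+1))) * besselJ (α+1) u) ^ 2)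
      (Set.Ici 0) := by
    apply antitoneOn_of_deriv_nonpos (convex_Ici 0)
    · exact fun t _ => (hder t).differentiableAt.continuousAt.continuousWithinAt
    · exact fun t _ => (hder t).differentiableAt.differentiableWithinAt
    · intro t ht
      rw [interior_Ici] at ht
      rw [(hder t).deriv]
      have h1 : (0:ℝ) < t := ht
      have h2 : (0:ℝ) ≤ t * (2*α+1) / (2*(α+1)^2) := by
        apply div_nonneg
        · nlinarith
        · positivity
      nlinarith [sq_nonneg (besselJ (α+1) t)]
  have hE0 : besselJ α 0 ^ 2 + (-((0:ℝ)/(2*(α+1))) * besselJ (α+1) 0) ^ 2 = 1 := by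
    rw [besselJ_zero α hα]
    norm_num
  have hEx := hanti (Set.self_mem_Ici) (by exact hx) hx
  simp only [] at hEx
  rw [hE0] at hEx
  have hsq : besselJ α x ^ 2 ≤ 1 := by
    nlinarith [sq_nonneg (-(x/(2*(α+1))) * besselJ (α+1) x)]
  exact le_trans (le_abs_self _) ((sq_le_one_iff_abs_le_one (besselJ α x)).mp hsq)
lemma partial_hasDerivAt (α : ℝ) (hα : -1 < α) (m : ℕ) (x : ℝ) :
    HasDerivAt (fun y : ℝ => ∑ k ∈ Finset.range (m+1),
        (-1:ℝ)^k * Real.Gamma (α+1) * (y/2)^(2*k) /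
          ((Nat.factorial k : ℝ) * Real.Gamma ((k:ℝ)+α+1)))
      (∑ k ∈ Finset.range m, -(x/(2*(α+1))) * (bb (α+1) k * x ^ (2*k))) x := by
  have hfun : (fun y : ℝ => ∑ k ∈ Finset.range (m+1), (-1:ℝ)^k * Real.Gamma (α+1) * (y/2)^(2*k) /
        ((Nat.factorial k:ℝ) * Real.Gamma ((k:ℝ)+α+1)))
      = fun y : ℝ => ∑ k ∈ Finset.range (m+1), bb α k * y ^ (2*k) := by
    funext y
    exact Finset.sum_congr rfl fun k _ => term_eq α hα y k
  rw [hfun]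
  have h := HasDerivAt.sum (x := x) (u := Finset.range (m+1))
    (A := fun k (y : ℝ) => bb α k * y ^ (2*k))
    (A' := fun k => bb α k * ((2*k : ℕ) * x ^ (2*k-1)))
    (fun k _ => (hasDerivAt_pow (2*k) x).const_mul (bb α k))
  convert h using 1
  · rfl
  · rfl
  · ext y
    simp [Finset.sum_apply]
  rw [Finset.sum_range_succ']
  have h0 : bb α 0 * ((2*0 : ℕ) * x ^ (2*0-1)) = 0 := by norm_num
  rw [h0, add_zero]
  apply Finset.sum_congr rfl
  intro i _
  have hne : ((i : ℝ) + α + 1) ≠ 0 := (gamma_arg_pos α hα i).ne'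
  have hα1' : (α + 1) ≠ 0 := by linarith
  have h5 : ((i:ℝ) + 1) ≠ 0 := by positivity
  rw [bb_succ α hα i, bb_alpha_succ α hα i, show 2*(i+1)-1 = 2*i+1 by omega]
  push_cast
  rw [pow_succ]
  field_simp
  ring

lemma psi_hasDerivAt (α : ℝ) (hα : -1 < α) (m : ℕ) (x : ℝ) :
    HasDerivAt (fun y => (-1:ℝ)^(m+1) * (besselJ α y - ∑ k ∈ Finset.range (m+1),
        (-1:ℝ)^k * Real.Gamma (α+1) * (y/2)^(2*k) /
          ((Nat.factorial k : ℝ) * Real.Gamma ((k:ℝ)+α+1))))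
      (x/(2*(α+1)) * ((-1:ℝ)^m * (besselJ (α+1) x - ∑ k ∈ Finset.range m,
        (-1:ℝ)^k * Real.Gamma (α+1+1) * (x/2)^(2*k) /
          ((Nat.factorial k : ℝ) * Real.Gamma ((k:ℝ)+(α+1)+1)))))
      x := by
  have hα1 : -1 < α + 1 := by linarith
  have hb := besselJ_hasDerivAt α hα x
  have hp := partial_hasDerivAt α hα m x
  have h := (hb.sub hp).const_mul ((-1:ℝ)^(m+1))
  convert h using 1
  · rfl
  · rfl
  · rfl
  have hS : ∑ k ∈ Finset.range m, (-1:ℝ)^k * Real.Gamma (α+1+1) * (x/2)^(2*k) /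
        ((Nat.factorial k:ℝ) * Real.Gamma ((k:ℝ)+(α+1)+1))
      = ∑ k ∈ Finset.range m, bb (α+1) k * x^(2*k) :=
    Finset.sum_congr rfl fun k _ => term_eq (α+1) hα1 x k
  rw [hS]
  have hM : ∑ k ∈ Finset.range m, -(x/(2*(α+1))) * (bb (α+1) k * x ^ (2*k))
      = -(x/(2*(α+1))) * ∑ k ∈ Finset.range m, bb (α+1) k * x ^ (2*k) := by
    rw [Finset.mul_sum]
  rw [hM, pow_succ]
  ring

lemma partial_at_zero (α : ℝ) (hα : -1 < α) (m : ℕ) :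
    ∑ k ∈ Finset.range (m+1), (-1:ℝ)^k * Real.Gamma (α+1) * ((0:ℝ)/2)^(2*k) /
      ((Nat.factorial k : ℝ) * Real.Gamma ((k:ℝ)+α+1)) = 1 := by
  have h1 : ∀ k ∈ Finset.range (m+1), (-1:ℝ)^k * Real.Gamma (α+1) * ((0:ℝ)/2)^(2*k) /
      ((Nat.factorial k : ℝ) * Real.Gamma ((k:ℝ)+α+1)) = bb α k * (0:ℝ) ^ (2*k) :=
    fun k _ => term_eq α hα 0 k
  rw [Finset.sum_congr rfl h1]
  rw [Finset.sum_eq_single_of_mem 0 (Finset.mem_range.mpr (by omega))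
    (fun k _ hk => by rw [zero_pow (by omega : 2*k ≠ 0), mul_zero])]
  rw [bb_zero α hα]
  norm_num

end BesselTail

open BesselTail in
/-- The alternating tail `ψ_m` of the Bessel series is nonnegative for `λ ≥ 0`. -/
theorem besselJ_tail_nonneg (α : ℝ) (hα : α > -1/2) (m : ℕ) (hm : 1 ≤ m)
    (lam : ℝ) (hlam : 0 ≤ lam) :
    0 ≤ (-1 : ℝ) ^ m * (besselJ α lam -
      ∑ k ∈ Finset.range m, (-1 : ℝ) ^ k * Real.Gamma (α + 1) * (lam / 2) ^ (2 * k) /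
        ((Nat.factorial k : ℝ) * Real.Gamma ((k : ℝ) + α + 1))) := by
  induction m, hm using Nat.le_induction generalizing α lam with
  | base =>
    have hα1 : -1 < α := by linarith
    have h1 : ∑ k ∈ Finset.range 1, (-1:ℝ)^k * Real.Gamma (α+1) * (lam/2)^(2*k) /
        ((Nat.factorial k : ℝ) * Real.Gamma ((k:ℝ)+α+1)) = 1 := by
      rw [Finset.sum_range_one]
      have hΓ : Real.Gamma (α+1) ≠ 0 :=
        (Real.Gamma_pos_of_pos (by linarith : (0:ℝ) < α + 1)).ne'
      norm_num [hΓ]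
    rw [h1, pow_one]
    have := besselJ_le_one α hα lam hlam
    nlinarith
  | succ m hm ih =>
    have hα1 : -1 < α := by linarith
    have hder := fun t => psi_hasDerivAt α hα1 m t
    have hmono : MonotoneOn (fun y => (-1:ℝ)^(m+1) * (besselJ α y -
        ∑ k ∈ Finset.range (m+1), (-1:ℝ)^k * Real.Gamma (α+1) * (y/2)^(2*k) /
          ((Nat.factorial k : ℝ) * Real.Gamma ((k:ℝ)+α+1)))) (Set.Ici 0) := by
      apply monotoneOn_of_deriv_nonneg (convex_Ici 0)
      · exact fun t _ => (hder t).differentiableAt.continuousAt.continuousWithinAt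
      · exact fun t _ => (hder t).differentiableAt.differentiableWithinAt
      · intro t ht
        rw [interior_Ici] at ht
        rw [(hder t).deriv]
        apply mul_nonneg
        · apply div_nonneg (le_of_lt ht)
          linarith
        · exact ih (α+1) (by linarith) t (le_of_lt ht)
    have h0 : ((fun y => (-1:ℝ)^(m+1) * (besselJ α y -
        ∑ k ∈ Finset.range (m+1), (-1:ℝ)^k * Real.Gamma (α+1) * (y/2)^(2*k) /
          ((Nat.factorial k : ℝ) * Real.Gamma ((k:ℝ)+α+1)))) 0) = 0 := by
      simp only []
      rw [besselJ_zero α hα1, partial_at_zero α hα1 m]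
      ring
    have := hmono Set.self_mem_Ici (by exact hlam : lam ∈ Set.Ici 0) hlam
    rw [h0] at this
    exact this
end

section
/- Let α > -1, a ≠ b nonnegative reals, and z > 0. Then ∫_0^z j_α(at) j_α(bt) t^{2α+1} dt = z^{2α+2} (a² j_{α+1}(az) j_α(bz) - b² j_α(az) j_{α+1}(bz)) / (2(α+1)(a² - b²)). -/
namespace BesselAux

open Finset

/-- Pochhammer-type product `(α+1)(α+2)⋯(α+k)`. -/
noncomputable def bq (α : ℝ) (k : ℕ) : ℝ := ∏ j ∈ Finset.range k, (α + 1 + j)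

/-- `k`-th term of the Bessel series. -/
noncomputable def bt (α : ℝ) (k : ℕ) (x : ℝ) : ℝ :=
  (-1) ^ k * (x / 2) ^ (2 * k) / (k.factorial * bq α k)

/-- Derivative of `bt`. -/
noncomputable def bt' (α : ℝ) (k : ℕ) (x : ℝ) : ℝ :=
  (-1) ^ k * k * (x / 2) ^ (2 * k - 1) / (k.factorial * bq α k)

lemma bq_zero (α : ℝ) : bq α 0 = 1 := by simp [bq]

lemma bq_succ (α : ℝ) (k : ℕ) : bq α (k + 1) = bq α k * (α + 1 + k) :=
  Finset.prod_range_succ _ _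

lemma bq_succ' (α : ℝ) (k : ℕ) : bq α (k + 1) = (α + 1) * bq (α + 1) k := by
  rw [bq, Finset.prod_range_succ']
  have h : ∀ j ∈ Finset.range k, (α + 1 + ((j : ℕ) + 1 : ℕ)) = (α + 1 + 1 + (j : ℝ)) := by
    intro j _; push_cast; ring
  rw [Finset.prod_congr rfl h]
  simp [bq, mul_comm]

lemma bq_pos {α : ℝ} (hα : -1 < α) (k : ℕ) : 0 < bq α k := by
  refine Finset.prod_pos fun j _ => ?_
  have : (0:ℝ) ≤ (j:ℝ) := j.cast_nonneg
  linarith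

lemma bq_ne {α : ℝ} (hα : -1 < α) (k : ℕ) : bq α k ≠ 0 := (bq_pos hα k).ne'

lemma bq_ge {α : ℝ} (hα : -1 < α) (k : ℕ) : min (α + 1) 1 ≤ bq α k := by
  induction k with
  | zero => simpa [bq_zero] using min_le_right (α+1) 1
  | succ k ih =>
    rcases Nat.eq_zero_or_pos k with hk | hk
    · subst hk
      simpa [bq_succ, bq_zero] using min_le_left (α+1) 1
    · have h1 : (1:ℝ) ≤ α + 1 + k := by
        have : (1:ℝ) ≤ (k:ℝ) := by exact_mod_cast hk
        linarith
      calc min (α+1) 1 ≤ bq α k := ih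
        _ ≤ bq α k * (α + 1 + k) := le_mul_of_one_le_right (bq_pos hα k).le h1
        _ = bq α (k+1) := (bq_succ α k).symm

lemma gamma_bq {α : ℝ} (hα : -1 < α) (k : ℕ) :
    Real.Gamma ((k : ℝ) + α + 1) = bq α k * Real.Gamma (α + 1) := by
  induction k with
  | zero => simp [bq_zero]
  | succ k ih =>
    have h : ((k + 1 : ℕ) : ℝ) + α + 1 = ((k : ℝ) + α + 1) + 1 := by push_cast; ring
    have hne : ((k : ℝ) + α + 1) ≠ 0 := by
      have h0 : (0:ℝ) ≤ (k:ℝ) := k.cast_nonneg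
      intro hc; linarith
    rw [h, Real.Gamma_add_one hne, ih, bq_succ]
    ring

lemma besselJ_eq {α : ℝ} (hα : -1 < α) (x : ℝ) : besselJ α x = ∑' k, bt α k x := by
  refine tsum_congr fun k => ?_
  have hG : Real.Gamma (α + 1) ≠ 0 := (Real.Gamma_pos_of_pos (by linarith)).ne'
  rw [gamma_bq hα k, bt]
  calc (-1:ℝ) ^ k * Real.Gamma (α + 1) * (x / 2) ^ (2 * k) /
        ((k.factorial : ℝ) * (bq α k * Real.Gamma (α + 1)))
      = ((-1:ℝ) ^ k * (x / 2) ^ (2 * k)) * Real.Gamma (α + 1) /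
        (((k.factorial : ℝ) * bq α k) * Real.Gamma (α + 1)) := by ring
    _ = (-1:ℝ) ^ k * (x / 2) ^ (2 * k) / ((k.factorial : ℝ) * bq α k) := by
        rw [mul_div_mul_right _ _ hG]

lemma summable_major (S m : ℝ) (hm : 0 < m) :
    Summable (fun k : ℕ => ((k : ℝ) + 1) * S ^ (2 * k) / (k.factorial * m)) := by
  refine Summable.of_nonneg_of_le (fun k => ?_)
    (fun k => ?_) (((Real.summable_pow_div_factorial (2 * S ^ 2)).mul_left (1 / m)))
  · have hSk : (0:ℝ) ≤ S ^ (2 * k) := by rw [pow_mul]; positivity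
    positivity
  have h1 : ((k : ℝ) + 1) ≤ 2 ^ k := by
    exact_mod_cast Nat.succ_le_of_lt (Nat.lt_two_pow_self)
  have h2 : ((k:ℝ)+1) * S ^ (2*k) ≤ (2*S^2)^k := by
    rw [pow_mul, mul_pow]
    have h3 : (0:ℝ) ≤ (S^2)^k := by positivity
    nlinarith
  have h4 : ((k:ℝ)+1) * S^(2*k) / ((k.factorial : ℝ) * m) ≤
      (2*S^2)^k / ((k.factorial : ℝ) * m) := by
    gcongr
  refine h4.trans (le_of_eq ?_)
  ring

lemma bt_norm_le {α : ℝ} (hα : -1 < α) (k : ℕ) {y S : ℝ} (hS : 1 ≤ S) (hy : |y| / 2 ≤ S) :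
    ‖bt α k y‖ ≤ ((k : ℝ) + 1) * S ^ (2 * k) / (k.factorial * min (α + 1) 1) := by
  have hm : 0 < min (α + 1) 1 := lt_min (by linarith) one_pos
  have hbq := bq_pos hα k
  have h1 : ‖bt α k y‖ = (|y| / 2) ^ (2 * k) / (k.factorial * bq α k) := by
    rw [bt, norm_div, norm_mul, norm_pow, norm_pow, norm_neg, norm_one, one_pow, one_mul,
      Real.norm_eq_abs, Real.norm_eq_abs, abs_div, abs_of_pos (by positivity : (0:ℝ) <
        (k.factorial : ℝ) * bq α k)]
    norm_num
  rw [h1]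
  have hnum : (|y| / 2) ^ (2 * k) ≤ ((k : ℝ) + 1) * S ^ (2 * k) := by
    have h2 : (|y| / 2) ^ (2 * k) ≤ S ^ (2 * k) :=
      pow_le_pow_left₀ (by positivity) hy _
    have h3 : (0:ℝ) ≤ S ^ (2*k) := by positivity
    nlinarith [Nat.cast_nonneg (α := ℝ) k]
  have hden : (k.factorial : ℝ) * min (α + 1) 1 ≤ (k.factorial : ℝ) * bq α k :=
    mul_le_mul_of_nonneg_left (bq_ge hα k) (Nat.cast_nonneg _)
  exact div_le_div₀ (by positivity) hnum (by positivity) hden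

lemma bt'_norm_le {α : ℝ} (hα : -1 < α) (k : ℕ) {y S : ℝ} (hS : 1 ≤ S) (hy : |y| / 2 ≤ S) :
    ‖bt' α k y‖ ≤ ((k : ℝ) + 1) * S ^ (2 * k) / (k.factorial * min (α + 1) 1) := by
  have hm : 0 < min (α + 1) 1 := lt_min (by linarith) one_pos
  have hbq := bq_pos hα k
  have h1 : ‖bt' α k y‖ = (k : ℝ) * (|y| / 2) ^ (2 * k - 1) / (k.factorial * bq α k) := by
    rw [bt', norm_div, norm_mul, norm_mul, norm_pow, norm_pow, norm_neg, norm_one, one_pow,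
      one_mul, Real.norm_eq_abs, Real.norm_eq_abs, Real.norm_eq_abs, abs_div,
      abs_of_nonneg (Nat.cast_nonneg (α := ℝ) k),
      abs_of_pos (by positivity : (0:ℝ) < (k.factorial : ℝ) * bq α k)]
    norm_num
  rw [h1]
  have hnum : (k : ℝ) * (|y| / 2) ^ (2 * k - 1) ≤ ((k : ℝ) + 1) * S ^ (2 * k) := by
    have h2 : (|y| / 2) ^ (2 * k - 1) ≤ S ^ (2 * k - 1) :=
      pow_le_pow_left₀ (by positivity) hy _
    have h3 : S ^ (2 * k - 1) ≤ S ^ (2 * k) :=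
      pow_le_pow_right₀ hS (Nat.sub_le _ _)
    have h4 : (0:ℝ) ≤ (k:ℝ) := Nat.cast_nonneg _
    nlinarith [pow_nonneg (by positivity : (0:ℝ) ≤ |y|/2) (2*k-1),
      pow_nonneg (le_trans zero_le_one hS) (2*k)]
  have hden : (k.factorial : ℝ) * min (α + 1) 1 ≤ (k.factorial : ℝ) * bq α k :=
    mul_le_mul_of_nonneg_left (bq_ge hα k) (Nat.cast_nonneg _)
  exact div_le_div₀ (by positivity) hnum (by positivity) hden

lemma summable_bt {α : ℝ} (hα : -1 < α) (x : ℝ) : Summable (fun k => bt α k x) := by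
  have hm : 0 < min (α + 1) 1 := lt_min (by linarith) one_pos
  refine Summable.of_norm (Summable.of_nonneg_of_le (fun k => norm_nonneg _)
    (fun k => bt_norm_le hα k (le_max_right (|x|/2) 1) (le_max_left _ _))
    (summable_major (max (|x|/2) 1) _ hm))

lemma summable_bt' {α : ℝ} (hα : -1 < α) (x : ℝ) : Summable (fun k => bt' α k x) := by
  have hm : 0 < min (α + 1) 1 := lt_min (by linarith) one_pos
  refine Summable.of_norm (Summable.of_nonneg_of_le (fun k => norm_nonneg _)
    (fun k => bt'_norm_le hα k (le_max_right (|x|/2) 1) (le_max_left _ _))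
    (summable_major (max (|x|/2) 1) _ hm))

lemma bt_hasDerivAt (α : ℝ) (k : ℕ) (x : ℝ) :
    HasDerivAt (fun y => bt α k y) (bt' α k x) x := by
  have h : HasDerivAt (fun y : ℝ => (y / 2) ^ (2 * k))
      ((2 * k : ℕ) * (x / 2) ^ (2 * k - 1) * (1 / 2)) x :=
    ((hasDerivAt_id x).div_const 2).pow (2 * k)
  have h2 := h.const_mul ((-1 : ℝ) ^ k / (k.factorial * bq α k))
  have hfun : (fun y => bt α k y) =
      fun y => ((-1 : ℝ) ^ k / (k.factorial * bq α k)) * (y / 2) ^ (2 * k) := by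
    funext y; rw [bt]; ring
  rw [hfun]
  convert h2 using 1
  · rfl
  · rfl
  rw [bt']
  push_cast
  ring

lemma besselJ_hasDerivAt {α : ℝ} (hα : -1 < α) (x : ℝ) :
    HasDerivAt (besselJ α) (-(x / (2 * (α + 1))) * besselJ (α + 1) x) x := by
  have hm : 0 < min (α + 1) 1 := lt_min (by linarith) one_pos
  have hb : besselJ α = fun y => ∑' k, bt α k y := funext fun y => besselJ_eq hα y
  set S : ℝ := max ((|x| + 1) / 2) 1 with hS
  have hS1 : 1 ≤ S := le_max_right _ _
  have key : HasDerivAt (fun y => ∑' k, bt α k y) (∑' k, bt' α k x) x := by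
    refine hasDerivAt_tsum_of_isPreconnected
      (u := fun k : ℕ => ((k : ℝ) + 1) * S ^ (2 * k) / (k.factorial * min (α + 1) 1))
      (summable_major S _ hm) (Metric.isOpen_ball (x := (0:ℝ)) (ε := |x| + 1))
      ((convex_ball (0:ℝ) (|x| + 1)).isPreconnected)
      (fun k y _ => bt_hasDerivAt α k y) (fun k y hy => ?_) (y₀ := x) ?_ (summable_bt hα x) ?_
    · have hy' : |y| < |x| + 1 := by
        simpa [Real.dist_eq] using hy
      exact bt'_norm_le hα k hS1 (by
        have : |y| / 2 ≤ (|x| + 1) / 2 := by linarith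
        exact this.trans (le_max_left _ _))
    · simp [Metric.mem_ball, Real.dist_eq]
    · simp [Metric.mem_ball, Real.dist_eq]
  have hsum : (∑' k, bt' α k x) = -(x / (2 * (α + 1))) * besselJ (α + 1) x := by
    rw [besselJ_eq (by linarith : (-1:ℝ) < α + 1) x, ← tsum_mul_left,
      Summable.tsum_eq_zero_add (summable_bt' hα x)]
    have h0 : bt' α 0 x = 0 := by simp [bt']
    rw [h0, zero_add]
    refine tsum_congr fun k => ?_
    rw [bt', bt, bq_succ']
    have hfk : ((k + 1).factorial : ℝ) = (k + 1) * k.factorial := by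
      push_cast [Nat.factorial_succ]; ring
    have h2 : 2 * (k + 1) - 1 = 2 * k + 1 := by omega
    rw [h2, hfk, pow_succ]
    have hα1 : (α + 1) ≠ 0 := by linarith
    have hbq : bq (α + 1) k ≠ 0 := bq_ne (by linarith) k
    have hf : ((k.factorial : ℝ)) ≠ 0 := Nat.cast_ne_zero.2 k.factorial_ne_zero
    have hk1 : ((k : ℝ) + 1) ≠ 0 := by positivity
    field_simp
    push_cast
    ring
  rw [hb]
  exact hsum ▸ key

lemma besselJ_sub {α : ℝ} (hα : -1 < α) (x : ℝ) :
    besselJ α x - besselJ (α + 1) x =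
      -(x ^ 2 / (4 * (α + 1) * (α + 2))) * besselJ (α + 2) x := by
  have hα1 : (-1:ℝ) < α + 1 := by linarith
  have hα2 : (-1:ℝ) < α + 2 := by linarith
  have hα1' : (α + 1) ≠ 0 := by linarith
  have hα2' : (α + 2) ≠ 0 := by linarith
  have e1 : besselJ α x = ∑' k, bt α k x := besselJ_eq hα x
  have e2 : besselJ (α + 1) x = ∑' k, bt (α + 1) k x := besselJ_eq hα1 x
  have e3 : besselJ (α + 2) x = ∑' k, bt (α + 2) k x := besselJ_eq hα2 x
  rw [e1, e2, e3, ← Summable.tsum_sub (summable_bt hα x) (summable_bt hα1 x)]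
  have hd : ∀ k, bt α k x - bt (α + 1) k x =
      (-1 : ℝ) ^ k * k * (x / 2) ^ (2 * k) / (k.factorial * bq α (k + 1)) := by
    intro k
    have hrel : (α + 1) * bq (α + 1) k = bq α k * (α + 1 + k) :=
      (bq_succ' α k).symm.trans (bq_succ α k)
    have hb1 : bq (α + 1) k = bq α k * (α + 1 + k) / (α + 1) := by
      rw [eq_div_iff hα1']; linarith [hrel]
    have hak : (α + 1 + (k:ℝ)) ≠ 0 := by
      have : (0:ℝ) ≤ (k:ℝ) := k.cast_nonneg
      intro hc; linarith
    have hf : ((k.factorial : ℝ)) ≠ 0 := Nat.cast_ne_zero.2 k.factorial_ne_zero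
    have hbq : bq α k ≠ 0 := bq_ne hα k
    rw [bt, bt, bq_succ, hb1]
    field_simp
    ring
  rw [tsum_congr hd]
  have hg : Summable (fun k => (-1 : ℝ) ^ k * k * (x / 2) ^ (2 * k) /
      (k.factorial * bq α (k + 1))) := by
    have := (summable_bt hα x).sub (summable_bt hα1 x)
    simpa [hd] using this
  rw [Summable.tsum_eq_zero_add hg]
  simp only [Nat.cast_zero, pow_zero, mul_zero, zero_mul, zero_div, zero_add]
  rw [← tsum_mul_left]
  refine tsum_congr fun k => ?_
  have hq : bq α (k + 2) = (α + 1) * ((α + 2) * bq (α + 2) k) := by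
    rw [show k + 2 = (k + 1) + 1 from rfl, bq_succ' α (k+1), bq_succ' (α+1) k,
      show α + 1 + 1 = α + 2 by ring]
  have hfk : ((k + 1).factorial : ℝ) = (k + 1) * k.factorial := by
    push_cast [Nat.factorial_succ]; ring
  rw [bt, show k + 1 + 1 = k + 2 from rfl, hq, hfk]
  have h2 : 2 * (k + 1) = 2 * k + 2 := by ring
  rw [h2, pow_add]
  have hf : ((k.factorial : ℝ)) ≠ 0 := Nat.cast_ne_zero.2 k.factorial_ne_zero
  have hbq : bq (α + 2) k ≠ 0 := bq_ne hα2 k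
  have hk1 : ((k : ℝ) + 1) ≠ 0 := by positivity
  field_simp
  push_cast
  ring

lemma besselJ_continuous {α : ℝ} (hα : -1 < α) : Continuous (besselJ α) :=
  continuous_iff_continuousAt.2 fun x => (besselJ_hasDerivAt hα x).continuousAt

/-- Derivative of `t ↦ j_α (c t)`. -/
lemma comp_hasDerivAt {α : ℝ} (hα : -1 < α) (c t : ℝ) :
    HasDerivAt (fun s => besselJ α (c * s))
      (-(c ^ 2 * t / (2 * (α + 1))) * besselJ (α + 1) (c * t)) t := by
  have h1 : HasDerivAt (fun s : ℝ => c * s) c t := by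
    simpa using (hasDerivAt_id t).const_mul c
  have h2 := (besselJ_hasDerivAt hα (c * t)).comp t h1
  convert h2 using 1
  · rfl
  · rfl
  · rfl
  ring

/-- Derivative of `t ↦ j_{α+1} (c t)` expressed via `j_α` and `j_{α+1}`. -/
lemma comp_succ_hasDerivAt {α : ℝ} (hα : -1 < α) (c : ℝ) {t : ℝ} (ht : t ≠ 0) :
    HasDerivAt (fun s => besselJ (α + 1) (c * s))
      (2 * (α + 1) * (besselJ α (c * t) - besselJ (α + 1) (c * t)) / t) t := by
  have h := comp_hasDerivAt (α := α + 1) (by linarith) c t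
  rw [show α + 1 + 1 = α + 2 by ring] at h
  convert h using 1
  rw [besselJ_sub hα (c * t)]
  have hα1 : (α + 1) ≠ 0 := by linarith
  have hα2 : (α + 2) ≠ 0 := by linarith
  field_simp
  ring

end BesselAux

set_option maxHeartbeats 2000000 in
open MeasureTheory BesselAux in
/-- The Lommel-type integral for products of normalized Bessel functions. -/
theorem besselJ_lommel (α : ℝ) (hα : α > -1) (a b : ℝ) (ha : 0 ≤ a) (hb : 0 ≤ b)
    (hab : a ≠ b) (z : ℝ) (hz : 0 < z) :
    ∫ t in (0:ℝ)..z, besselJ α (a * t) * besselJ α (b * t) * t ^ (2 * α + 1) =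
      z ^ (2 * α + 2) *
        (a ^ 2 * besselJ (α + 1) (a * z) * besselJ α (b * z) -
          b ^ 2 * besselJ α (a * z) * besselJ (α + 1) (b * z)) /
        (2 * (α + 1) * (a ^ 2 - b ^ 2)) := by
  have hα1 : (-1:ℝ) < α + 1 := by linarith
  have hα1' : (α + 1) ≠ 0 := by linarith
  have hab2 : a ^ 2 - b ^ 2 ≠ 0 := by
    intro h
    rcases sq_eq_sq_iff_eq_or_eq_neg.1 (by linarith : a ^ 2 = b ^ 2) with h1 | h1
    · exact hab h1
    · apply hab
      have hb0 : b = 0 := by linarith [h1 ▸ ha]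
      rw [hb0] at h1 ⊢; simpa using h1
  set C : ℝ := 2 * (α + 1) * (a ^ 2 - b ^ 2) with hC
  have hCne : C ≠ 0 := by
    simp only [hC]
    positivity
  set F : ℝ → ℝ := fun t => t ^ (2 * α + 2) *
      (a ^ 2 * besselJ (α + 1) (a * t) * besselJ α (b * t) -
        b ^ 2 * besselJ α (a * t) * besselJ (α + 1) (b * t)) / C with hF
  have hcont : ContinuousOn F (Set.Icc 0 z) := by
    have hrpow : ContinuousOn (fun t : ℝ => t ^ (2 * α + 2)) (Set.Icc 0 z) :=
      fun t _ => (Real.continuousAt_rpow_const t _ (Or.inr (by linarith))).continuousWithinAt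
    have hc1 : Continuous fun t : ℝ => a * t := continuous_const.mul continuous_id
    have hc2 : Continuous fun t : ℝ => b * t := continuous_const.mul continuous_id
    have hJ1a : Continuous fun t : ℝ => besselJ (α + 1) (a * t) :=
      (besselJ_continuous hα1).comp hc1
    have hJa : Continuous fun t : ℝ => besselJ α (a * t) := (besselJ_continuous hα).comp hc1
    have hJ1b : Continuous fun t : ℝ => besselJ (α + 1) (b * t) :=
      (besselJ_continuous hα1).comp hc2
    have hJb : Continuous fun t : ℝ => besselJ α (b * t) := (besselJ_continuous hα).comp hc2
    exact (hrpow.mul (((((continuous_const.mul hJ1a).mul hJb)).sub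
      (((continuous_const.mul hJa).mul hJ1b))).continuousOn)).div_const C
  have hint : IntervalIntegrable
      (fun t => besselJ α (a * t) * besselJ α (b * t) * t ^ (2 * α + 1)) volume 0 z := by
    have h1 : IntervalIntegrable (fun t : ℝ => t ^ (2 * α + 1)) volume 0 z :=
      intervalIntegral.intervalIntegrable_rpow' (by linarith)
    have hc1 : Continuous fun t : ℝ => besselJ α (a * t) * besselJ α (b * t) :=
      ((besselJ_continuous hα).comp (continuous_const.mul continuous_id)).mul
        ((besselJ_continuous hα).comp (continuous_const.mul continuous_id))
    exact h1.continuousOn_mul hc1.continuousOn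
  have hderiv : ∀ t ∈ Set.Ioo (0:ℝ) z, HasDerivAt F
      (besselJ α (a * t) * besselJ α (b * t) * t ^ (2 * α + 1)) t := by
    intro t ht
    have ht0 : (0:ℝ) < t := ht.1
    have htne : t ≠ 0 := ht0.ne'
    have hrpow : HasDerivAt (fun t : ℝ => t ^ (2 * α + 2))
        ((2 * α + 2) * t ^ (2 * α + 1)) t := by
      have h := Real.hasDerivAt_rpow_const (x := t) (p := 2 * α + 2) (Or.inl htne)
      have he : 2 * α + 2 - 1 = 2 * α + 1 := by ring
      rwa [he] at h
    have hA := comp_hasDerivAt hα a t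
    have hB := comp_hasDerivAt hα b t
    have hA1 := comp_succ_hasDerivAt hα a htne
    have hB1 := comp_succ_hasDerivAt hα b htne
    have hbig := ((hrpow.mul (((hA1.mul hB).const_mul (a ^ 2)).sub
      ((hA.mul hB1).const_mul (b ^ 2)))).div_const C)
    convert hbig using 1
    · rfl
    · rfl
    · rw [hF]; funext s; simp only [Pi.mul_apply, Pi.sub_apply]; ring
    have hsplit : t ^ (2 * α + 2) = t ^ (2 * α + 1) * t := by
      rw [show 2 * α + 2 = (2 * α + 1) + 1 by ring, Real.rpow_add ht0, Real.rpow_one]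
    simp only [Pi.mul_apply, Pi.sub_apply]
    rw [hsplit]
    set P : ℝ := t ^ (2 * α + 1)
    set A : ℝ := besselJ α (a * t)
    set A1 : ℝ := besselJ (α + 1) (a * t)
    set B : ℝ := besselJ α (b * t)
    set B1 : ℝ := besselJ (α + 1) (b * t)
    rw [hC]
    field_simp
    ring
  have := intervalIntegral.integral_eq_sub_of_hasDeriv_right_of_le hz.le hcont
    (fun t ht => (hderiv t ht).hasDerivWithinAt) hint
  rw [this]
  have hF0 : F 0 = 0 := by
    simp only [hF]
    rw [Real.zero_rpow (by linarith : 2 * α + 2 ≠ 0)]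
    simp
  rw [hF0, sub_zero]
end

section
/- Let α > -1 and φ(t) = j_α(qt) with j_α(q) = 0. There exist sequences of real numbers a_{kj} and b_{kj} (depending only on α and k, j, not on q except through q^{2j}) with a_{kk} = (-1)^k, such that for all k ≥ 0: φ^{(2k+1)}(1) = φ'(1) Σ_{j=0}^k a_{kj} q^{2j} and φ^{(2k+2)}(1) = φ'(1) Σ_{j=0}^k b_{kj} q^{2j}. -/
open Finset

open ContDiff

noncomputable def bc (α : ℝ) (k : ℕ) : ℝ :=
  (-1)^k * Real.Gamma (α+1) / ((4:ℝ)^k * (Nat.factorial k) * Real.Gamma ((k:ℝ) + α + 1))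

def dd : ℕ → ℕ → ℕ
  | 0, _ => 1
  | (m+1), k => dd m k * (2*k - m)

noncomputable def FF (α : ℝ) (m : ℕ) (x : ℝ) : ℝ := ∑' k, bc α k * dd m k * x ^ (2*k - m)

lemma gamma_pos {α : ℝ} (hα : α > -1) (k : ℕ) : 0 < Real.Gamma ((k:ℝ) + α + 1) := by
  apply Real.Gamma_pos_of_pos
  have : (0:ℝ) ≤ k := Nat.cast_nonneg k
  linarith

lemma bc_succ {α : ℝ} (hα : α > -1) (k : ℕ) :
    bc α (k+1) * (4*((k:ℝ)+1)*((k:ℝ)+1+α)) = - bc α k := by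
  have h1 : Real.Gamma (((k+1:ℕ):ℝ) + α + 1) = (((k:ℝ)+α+1)) * Real.Gamma ((k:ℝ)+α+1) := by
    push_cast
    rw [show (k:ℝ) + 1 + α + 1 = ((k:ℝ) + α + 1) + 1 by ring, Real.Gamma_add_one]
    have : (0:ℝ) ≤ k := Nat.cast_nonneg k
    nlinarith
  have hg : Real.Gamma ((k:ℝ)+α+1) ≠ 0 := (gamma_pos hα k).ne'
  have hkα : ((k:ℝ)+α+1) ≠ 0 := by have : (0:ℝ) ≤ k := Nat.cast_nonneg k; nlinarith
  have hf : ((Nat.factorial k : ℝ)) ≠ 0 := Nat.cast_ne_zero.2 k.factorial_ne_zero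
  have hf1 : ((Nat.factorial (k+1) : ℝ)) = ((k:ℝ)+1) * (Nat.factorial k : ℝ) := by
    push_cast [Nat.factorial_succ]; ring
  unfold bc
  rw [h1, hf1]
  have h4 : ((4:ℝ))^(k+1) = 4 * 4^k := by ring
  rw [h4]
  field_simp
  ring

lemma bc_ne_zero {α : ℝ} (hα : α > -1) (k : ℕ) : bc α k ≠ 0 := by
  unfold bc
  have h0 : Real.Gamma (α+1) ≠ 0 := (Real.Gamma_pos_of_pos (by linarith)).ne'
  have hg : Real.Gamma ((k:ℝ)+α+1) ≠ 0 := (gamma_pos hα k).ne'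
  have hf : ((Nat.factorial k : ℝ)) ≠ 0 := Nat.cast_ne_zero.2 k.factorial_ne_zero
  have h4 : ((4:ℝ))^k ≠ 0 := by positivity
  intro h
  rcases div_eq_zero_iff.1 h with h' | h'
  · rcases mul_eq_zero.1 h' with h'' | h''
    · exact (pow_ne_zero k (by norm_num : (-1:ℝ) ≠ 0)) h''
    · exact h0 h''
  · simp only [mul_eq_zero] at h'
    tauto

lemma abs_bc_succ {α : ℝ} (hα : α > -1) (k : ℕ) :
    |bc α k| = (4*((k:ℝ)+1)*((k:ℝ)+1+α)) * |bc α (k+1)| := by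
  have h := bc_succ hα k
  have hpos : (0:ℝ) < 4*((k:ℝ)+1)*((k:ℝ)+1+α) := by
    have : (0:ℝ) ≤ k := Nat.cast_nonneg k
    nlinarith
  calc |bc α k| = |bc α (k+1) * (4*((k:ℝ)+1)*((k:ℝ)+1+α))| := by rw [h, abs_neg]
  _ = |bc α (k+1)| * |4*((k:ℝ)+1)*((k:ℝ)+1+α)| := abs_mul _ _
  _ = (4*((k:ℝ)+1)*((k:ℝ)+1+α)) * |bc α (k+1)| := by rw [abs_of_pos hpos]; ring

lemma master {α : ℝ} (hα : α > -1) (m : ℕ) (R : ℝ) (hR : 1 ≤ R) :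
    Summable (fun k : ℕ => |bc α k| * (2*(k:ℝ)+2)^m * R^(2*k)) := by
  apply summable_of_ratio_norm_eventually_le (r := 1/2) (by norm_num)
  rw [Filter.eventually_atTop]
  refine ⟨⌈(2:ℝ)^m * R^2⌉₊ + ⌈|α|⌉₊ + 1, fun k hk => ?_⟩
  have hk1 : ((⌈(2:ℝ)^m * R^2⌉₊ : ℕ) : ℝ) ≤ (k:ℝ) := Nat.cast_le.2 (by omega)
  have hk2 : ((⌈|α|⌉₊ : ℕ) : ℝ) ≤ (k:ℝ) := Nat.cast_le.2 (by omega)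
  have hR2 : (2:ℝ)^m * R^2 ≤ (k:ℝ) := le_trans (Nat.le_ceil _) hk1
  have hαk : |α| ≤ (k:ℝ) := le_trans (Nat.le_ceil _) hk2
  have hα1 : (1:ℝ) ≤ (k:ℝ)+1+α := by
    have := abs_le.1 (le_refl |α|) |>.1
    linarith [abs_le.1 (le_refl |α|)]
  have hb := abs_bc_succ hα k
  have hRpos : (0:ℝ) < R := by linarith
  have hknn : (0:ℝ) ≤ k := Nat.cast_nonneg k
  have habs : ∀ j : ℕ, ‖|bc α j| * (2*(j:ℝ)+2)^m * R^(2*j)‖ = |bc α j| * (2*(j:ℝ)+2)^m * R^(2*j) := by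
    intro j
    rw [Real.norm_eq_abs, abs_of_nonneg]
    positivity
  rw [habs, habs, hb]
  push_cast
  -- goal: (4(k+1)(k+1+α) * |bc (k+1)|) ... inequality
  set B := |bc α (k+1)| with hB
  have hBnn : 0 ≤ B := abs_nonneg _
  have hstep : (2*((k:ℝ)+1)+2)^m ≤ 2^m * (2*(k:ℝ)+2)^m := by
    rw [← mul_pow]
    apply pow_le_pow_left₀ (by linarith)
    linarith
  have hRp : R^(2*(k+1)) = R^(2*k) * R^2 := by rw [← pow_add]; ring_nf
  rw [hRp]
  have hRkn : (0:ℝ) ≤ R^(2*k) := by positivity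
  calc B * (2*((k:ℝ)+1)+2)^m * (R^(2*k) * R^2)
      ≤ B * (2^m * (2*(k:ℝ)+2)^m) * (R^(2*k) * R^2) := by
        apply mul_le_mul_of_nonneg_right _ (by positivity)
        exact mul_le_mul_of_nonneg_left hstep hBnn
    _ = (2^m * R^2) * B * (2*(k:ℝ)+2)^m * R^(2*k) := by ring
    _ ≤ (k:ℝ) * B * (2*(k:ℝ)+2)^m * R^(2*k) := by
        apply mul_le_mul_of_nonneg_right _ hRkn
        apply mul_le_mul_of_nonneg_right _ (by positivity)
        exact mul_le_mul_of_nonneg_right hR2 hBnn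
    _ ≤ (1/2 * (4*((k:ℝ)+1)*((k:ℝ)+1+α))) * B * (2*(k:ℝ)+2)^m * R^(2*k) := by
        apply mul_le_mul_of_nonneg_right _ hRkn
        apply mul_le_mul_of_nonneg_right _ (by positivity)
        apply mul_le_mul_of_nonneg_right _ hBnn
        nlinarith
    _ = 1/2 * (4*((k:ℝ)+1)*((k:ℝ)+1+α) * B * (2*(k:ℝ)+2)^m * R^(2*k)) := by ring

lemma dd_le (m k : ℕ) : ((dd m k : ℕ) : ℝ) ≤ (2*(k:ℝ)+2)^m := by
  induction m with
  | zero => simp [dd]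
  | succ m ih =>
    have h : ((dd (m+1) k : ℕ) : ℝ) = (dd m k : ℝ) * ((2*k - m : ℕ) : ℝ) := by
      push_cast [dd]; ring
    rw [h, pow_succ]
    have h2 : ((2*k - m : ℕ) : ℝ) ≤ 2*(k:ℝ)+2 := by
      have : (2*k - m : ℕ) ≤ 2*k + 2 := by omega
      calc ((2*k - m : ℕ) : ℝ) ≤ ((2*k+2 : ℕ) : ℝ) := Nat.cast_le.2 this
        _ = 2*(k:ℝ)+2 := by push_cast; ring
    have hnn : (0:ℝ) ≤ (dd m k : ℝ) := Nat.cast_nonneg _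
    exact mul_le_mul ih h2 (Nat.cast_nonneg _) (by positivity)

lemma term_bound {α : ℝ} (m k : ℕ) {x R : ℝ} (hR : 1 ≤ R) (hx : |x| ≤ R) :
    ‖bc α k * (dd m k : ℝ) * x ^ (2*k - m)‖ ≤ |bc α k| * (2*(k:ℝ)+2)^m * R^(2*k) := by
  rw [Real.norm_eq_abs, abs_mul, abs_mul]
  have h1 : |((dd m k : ℕ):ℝ)| = ((dd m k : ℕ):ℝ) := abs_of_nonneg (Nat.cast_nonneg _)
  rw [h1]
  have h2 : |x ^ (2*k - m)| ≤ R^(2*k) := by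
    rw [abs_pow]
    calc |x| ^ (2*k-m) ≤ R ^ (2*k-m) := pow_le_pow_left₀ (abs_nonneg x) hx _
      _ ≤ R^(2*k) := pow_le_pow_right₀ hR (by omega)
  have := dd_le m k
  apply mul_le_mul
  · exact mul_le_mul_of_nonneg_left this (abs_nonneg _)
  · exact h2
  · exact abs_nonneg _
  · positivity

lemma summable_term {α : ℝ} (hα : α > -1) (m : ℕ) (x : ℝ) :
    Summable (fun k : ℕ => bc α k * (dd m k : ℝ) * x ^ (2*k - m)) := by
  have hR : (1:ℝ) ≤ max |x| 1 := le_max_right _ _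
  exact Summable.of_norm_bounded (master hα m _ hR)
    (fun k => term_bound m k hR (le_max_left _ _))

lemma hasDerivAt_FF {α : ℝ} (hα : α > -1) (m : ℕ) (x : ℝ) :
    HasDerivAt (FF α m) (FF α (m+1) x) x := by
  set R : ℝ := |x| + 2 with hRdef
  have hR : (1:ℝ) ≤ R := by have := abs_nonneg x; rw [hRdef]; linarith
  have hball : x ∈ Metric.ball (0:ℝ) R := by
    rw [Metric.mem_ball, Real.dist_eq, sub_zero, hRdef]; linarith [abs_nonneg x]
  have h0ball : (0:ℝ) ∈ Metric.ball (0:ℝ) R := by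
    rw [Metric.mem_ball, dist_self]; linarith [abs_nonneg x]
  unfold FF
  refine hasDerivAt_tsum_of_isPreconnected
    (u := fun k => |bc α k| * (2*(k:ℝ)+2)^(m+1) * R^(2*k))
    (g := fun k y => bc α k * (dd m k : ℝ) * y ^ (2*k - m))
    (g' := fun k y => bc α k * (dd (m+1) k : ℝ) * y ^ (2*k - (m+1)))
    (y₀ := 0)
    (master hα (m+1) R hR) Metric.isOpen_ball (convex_ball (0:ℝ) R).isPreconnected
    ?_ ?_ ?_ ?_ ?_
  · intro k y _
    have h : HasDerivAt (fun y : ℝ => y ^ (2*k - m))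
        ((2*k-m : ℕ) * y ^ (2*k - m - 1)) y := hasDerivAt_pow _ y
    have h2 := h.const_mul (bc α k * (dd m k : ℝ))
    have he : 2*k - m - 1 = 2*k - (m+1) := by omega
    have hd : ((dd (m+1) k : ℕ) : ℝ) = (dd m k : ℝ) * ((2*k - m : ℕ) : ℝ) := by
      push_cast [dd]; ring
    show HasDerivAt _ (bc α k * (dd (m+1) k : ℝ) * y ^ (2*k - (m+1))) y
    refine h2.congr_deriv ?_
    rw [hd, ← he]
    ring
  · intro k y hy
    have hyR : |y| ≤ R := by
      rw [Metric.mem_ball, Real.dist_eq, sub_zero] at hy; linarith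
    exact term_bound (m+1) k hR hyR
  · exact h0ball
  · exact summable_term hα m 0
  · exact hball

lemma deriv_FF {α : ℝ} (hα : α > -1) (m : ℕ) : deriv (FF α m) = FF α (m+1) :=
  funext fun x => (hasDerivAt_FF hα m x).deriv

lemma contDiff_FF {α : ℝ} (hα : α > -1) (m : ℕ) : ContDiff ℝ ∞ (FF α m) := by
  suffices h : ∀ (n : ℕ) (m : ℕ), ContDiff ℝ (n : WithTop ℕ∞) (FF α m) by
    rw [contDiff_infty]
    intro n
    exact h n m
  intro n
  induction n with
  | zero =>
    intro m
    rw [show ((0:ℕ) : WithTop ℕ∞) = 0 by rfl, contDiff_zero]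
    exact continuous_iff_continuousAt.2 fun x => (hasDerivAt_FF hα m x).continuousAt
  | succ n ih =>
    intro m
    rw [show (((n+1:ℕ)) : WithTop ℕ∞) = (n : WithTop ℕ∞) + 1 by push_cast; rfl,
      contDiff_succ_iff_deriv, deriv_FF hα m]
    refine ⟨fun x => (hasDerivAt_FF hα m x).differentiableAt, by simp, ih (m+1)⟩

lemma besselJ_eq (α : ℝ) : besselJ α = FF α 0 := by
  funext x
  unfold besselJ FF
  apply tsum_congr
  intro k
  have h4 : ((4:ℝ))^k = 2^(2*k) := by rw [pow_mul]; norm_num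
  have hx : (x/2)^(2*k) = x^(2*k) / 2^(2*k) := div_pow x 2 (2*k)
  unfold bc
  rw [hx, h4]
  have hd : ((dd 0 k : ℕ) : ℝ) = 1 := by simp [dd]
  rw [hd, Nat.sub_zero]
  have h2 : (2:ℝ)^(2*k) ≠ 0 := by positivity
  field_simp

lemma ode_FF {α : ℝ} (hα : α > -1) (x : ℝ) :
    x * FF α 2 x + (2*α+1) * FF α 1 x + x * FF α 0 x = 0 := by
  have S0 := summable_term hα 0 x
  have S1 := summable_term hα 1 x
  have S2 := summable_term hα 2 x
  have hFF2 : x * FF α 2 x = ∑' k, x * (bc α k * (dd 2 k : ℝ) * x^(2*k-2)) := by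
    rw [FF, ← tsum_mul_left]
  have hFF1 : (2*α+1) * FF α 1 x = ∑' k, (2*α+1) * (bc α k * (dd 1 k : ℝ) * x^(2*k-1)) := by
    rw [FF, ← tsum_mul_left]
  have hFF0 : x * FF α 0 x = ∑' k, x * (bc α k * (dd 0 k : ℝ) * x^(2*k-0)) := by
    rw [FF, ← tsum_mul_left]
  rw [hFF2, hFF1, hFF0]
  rw [← Summable.tsum_add (S2.mul_left x) (S1.mul_left (2*α+1))]
  set w : ℕ → ℝ := fun k => x * (bc α k * (dd 2 k : ℝ) * x^(2*k-2))
    + (2*α+1) * (bc α k * (dd 1 k : ℝ) * x^(2*k-1)) with hw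
  have hwsum : Summable w := (S2.mul_left x).add (S1.mul_left (2*α+1))
  have hw0 : w 0 = 0 := by simp [hw, dd]
  have hws : ∀ k : ℕ, w (k+1) = - (x * (bc α k * (dd 0 k : ℝ) * x^(2*k-0))) := by
    intro k
    have hd2 : ((dd 2 (k+1) : ℕ) : ℝ) = (2*(k:ℝ)+2)*(2*(k:ℝ)+1) := by
      show ((dd 1 (k+1) * (2*(k+1) - 1) : ℕ) : ℝ) = _
      have : dd 1 (k+1) = 2*(k+1) := by simp [dd]
      rw [this]
      push_cast [show 2*(k+1) - 1 = 2*k+1 by omega]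
      ring
    have hd1 : ((dd 1 (k+1) : ℕ) : ℝ) = 2*(k:ℝ)+2 := by
      have : dd 1 (k+1) = 2*(k+1) := by simp [dd]
      rw [this]; push_cast; ring
    have hd0 : ((dd 0 k : ℕ) : ℝ) = 1 := by simp [dd]
    have he2 : 2*(k+1) - 2 = 2*k := by omega
    have he1 : 2*(k+1) - 1 = 2*k+1 := by omega
    have he0 : 2*k - 0 = 2*k := by omega
    rw [hw]
    simp only []
    rw [hd2, hd1, hd0, he2, he1, he0]
    have hbs := bc_succ hα k
    have : x * (bc α (k+1) * ((2*(k:ℝ)+2)*(2*(k:ℝ)+1)) * x^(2*k))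
        + (2*α+1) * (bc α (k+1) * (2*(k:ℝ)+2) * x^(2*k+1))
        = (bc α (k+1) * (4*((k:ℝ)+1)*((k:ℝ)+1+α))) * x^(2*k+1) := by
      rw [pow_succ]
      ring
    rw [this, hbs]
    ring
  rw [Summable.tsum_eq_zero_add hwsum, hw0, zero_add]
  rw [tsum_congr hws, tsum_neg]
  ring

lemma iter_add {u v : ℝ → ℝ} (hu : ContDiff ℝ ∞ u) (hv : ContDiff ℝ ∞ v) (n : ℕ) (x : ℝ) :
    iteratedDeriv n (fun t => u t + v t) x = iteratedDeriv n u x + iteratedDeriv n v x := by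
  rw [← iteratedDerivWithin_univ (f := fun t => u t + v t),
      ← iteratedDerivWithin_univ (f := u), ← iteratedDerivWithin_univ (f := v)]
  exact iteratedDerivWithin_add (Set.mem_univ x) uniqueDiffOn_univ
    (hu.contDiffWithinAt.of_le (by exact_mod_cast (le_top : (n:ℕ∞) ≤ ⊤)))
    (hv.contDiffWithinAt.of_le (by exact_mod_cast (le_top : (n:ℕ∞) ≤ ⊤)))

lemma iter_cmul {u : ℝ → ℝ} (hu : ContDiff ℝ ∞ u) (c : ℝ) (n : ℕ) (x : ℝ) :
    iteratedDeriv n (fun t => c * u t) x = c * iteratedDeriv n u x := by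
  rw [← iteratedDerivWithin_univ (f := fun t => c * u t), ← iteratedDerivWithin_univ (f := u)]
  exact iteratedDerivWithin_const_mul (Set.mem_univ x) uniqueDiffOn_univ c
    (hu.contDiffWithinAt.of_le (by exact_mod_cast (le_top : (n:ℕ∞) ≤ ⊤)))

lemma iter_zero (n : ℕ) (x : ℝ) : iteratedDeriv n (fun _ : ℝ => (0:ℝ)) x = 0 := by
  induction n generalizing x with
  | zero => rfl
  | succ n ih =>
    rw [iteratedDeriv_succ']
    have : deriv (fun _ : ℝ => (0:ℝ)) = fun _ : ℝ => (0:ℝ) := by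
      funext y; exact deriv_const y 0
    rw [this, ih]

lemma iter_id_mul {g : ℝ → ℝ} (hg : ContDiff ℝ ∞ g) (n : ℕ) (x : ℝ) :
    iteratedDeriv (n+1) (fun t => t * g t) x
      = x * iteratedDeriv (n+1) g x + (n+1 : ℝ) * iteratedDeriv n g x := by
  have hdiff : ∀ m : ℕ, Differentiable ℝ (iteratedDeriv m g) := by
    intro m
    apply hg.differentiable_iteratedDeriv
    exact_mod_cast (WithTop.coe_lt_coe.2 (ENat.coe_lt_top m))
  induction n generalizing x with
  | zero =>
    have h : HasDerivAt (fun t : ℝ => t * g t) (1 * g x + x * deriv g x) x :=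
      (hasDerivAt_id x).mul ((hg.differentiable (by simp) x).hasDerivAt)
    rw [iteratedDeriv_one, h.deriv, iteratedDeriv_one, iteratedDeriv_zero]
    push_cast; ring
  | succ n ih =>
    have hfun : iteratedDeriv (n+1) (fun t : ℝ => t * g t)
        = fun y => y * iteratedDeriv (n+1) g y + ((n:ℝ)+1) * iteratedDeriv n g y := by
      funext y; rw [ih]
    rw [iteratedDeriv_succ, hfun]
    have hA : HasDerivAt (fun y : ℝ => y * iteratedDeriv (n+1) g y + ((n:ℝ)+1) * iteratedDeriv n g y)
        ((1 * iteratedDeriv (n+1) g x + x * deriv (iteratedDeriv (n+1) g) x)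
          + ((n:ℝ)+1) * deriv (iteratedDeriv n g) x) x := by
      exact ((hasDerivAt_id x).mul ((hdiff (n+1) x).hasDerivAt)).add
        (((hdiff n x).hasDerivAt).const_mul ((n:ℝ)+1))
    rw [hA.deriv, ← iteratedDeriv_succ, ← iteratedDeriv_succ]
    push_cast; ring

noncomputable def QQ (α : ℝ) : ℕ → ℕ → ℝ
  | 0 => fun _ => 0
  | 1 => fun j => if j = 0 then 1 else 0
  | 2 => fun j => if j = 0 then -(2*α+1) else 0
  | (m+3) => fun j => -(((m+1:ℕ):ℝ)+2*α+1) * QQ α (m+2) j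
      - (if j = 0 then 0 else QQ α (m+1) (j-1) + ((m+1:ℕ):ℝ) * QQ α m (j-1))

lemma QQ_support (α : ℝ) : ∀ s j : ℕ, s < 2*j+1 → QQ α s j = 0 := by
  intro s
  induction s using Nat.strong_induction_on with
  | _ s ih =>
    match s with
    | 0 => intro j _; rfl
    | 1 => intro j hj; have : j ≠ 0 := by omega
           simp [QQ, this]
    | 2 => intro j hj; have : j ≠ 0 := by omega
           simp [QQ, this]
    | (m+3) =>
      intro j hj
      have hj0 : j ≠ 0 := by omega
      have h2 := ih (m+2) (by omega) j (by omega)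
      have h1 := ih (m+1) (by omega) (j-1) (by omega)
      have h0 := ih m (by omega) (j-1) (by omega)
      simp only [QQ, hj0, if_false]
      rw [h2, h1, h0]
      ring

lemma QQ_diag (α : ℝ) : ∀ k : ℕ, QQ α (2*k+1) k = (-1 : ℝ)^k := by
  intro k
  induction k with
  | zero => simp [QQ]
  | succ k ih =>
    have hs : 2*(k+1)+1 = (2*k)+3 := by omega
    rw [hs]
    have hj0 : k+1 ≠ 0 := by omega
    simp only [QQ, hj0, if_false]
    have h2 : QQ α (2*k+2) (k+1) = 0 := QQ_support α _ _ (by omega)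
    have h0 : QQ α (2*k) k = 0 := QQ_support α _ _ (by omega)
    have hk1 : k + 1 - 1 = k := by omega
    rw [hk1, h2, h0, ih]
    ring

section Phi

variable {α q : ℝ} (hα : α > -1)
include hα

lemma hc_phi (m : ℕ) : ContDiff ℝ ∞ (fun t : ℝ => FF α m (q*t)) :=
  (contDiff_FF hα m).comp (contDiff_const.mul contDiff_id)

lemma hder_phi (m : ℕ) :
    deriv (fun t : ℝ => FF α m (q*t)) = fun t : ℝ => q * FF α (m+1) (q*t) := by
  funext t
  have h2 : HasDerivAt (fun y : ℝ => q * y) q t := by simpa using (hasDerivAt_id t).const_mul q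
  have h := (hasDerivAt_FF hα m (q*t)).comp t h2
  have h' : HasDerivAt (fun t : ℝ => FF α m (q*t)) (q * FF α (m+1) (q*t)) t := by
    simpa [Function.comp_def, mul_comm] using h
  exact h'.deriv

lemma hdd_phi : deriv (deriv (fun t : ℝ => FF α 0 (q*t)))
    = fun t : ℝ => q * (q * FF α 2 (q*t)) := by
  rw [hder_phi hα 0]
  funext t
  have h : deriv (fun t : ℝ => q * FF α 1 (q*t)) t = q * deriv (fun t : ℝ => FF α 1 (q*t)) t := by
    apply deriv_const_mul
    exact ((hc_phi hα 1).differentiable (by simp)).differentiableAt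
  rw [h, hder_phi hα 1]

lemma ode_phi (t : ℝ) :
    t * (q * (q * FF α 2 (q*t))) + ((2*α+1) * (q * FF α 1 (q*t))
      + q^2 * (t * FF α 0 (q*t))) = 0 := by
  have h := ode_FF hα (q*t)
  linear_combination q * h

lemma D_rec (n : ℕ) :
    iteratedDeriv (n+3) (fun t : ℝ => FF α 0 (q*t)) 1
      + (((n:ℝ)+1) + (2*α+1)) * iteratedDeriv (n+2) (fun t : ℝ => FF α 0 (q*t)) 1
      + q^2 * iteratedDeriv (n+1) (fun t : ℝ => FF α 0 (q*t)) 1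
      + ((n:ℝ)+1) * q^2 * iteratedDeriv n (fun t : ℝ => FF α 0 (q*t)) 1 = 0 := by
  set φ : ℝ → ℝ := fun t => FF α 0 (q*t) with hφ
  set g2 : ℝ → ℝ := fun t => q * (q * FF α 2 (q*t)) with hg2
  set g1 : ℝ → ℝ := fun t => q * FF α 1 (q*t) with hg1
  have hcg2 : ContDiff ℝ ∞ g2 := contDiff_const.mul (contDiff_const.mul (hc_phi hα 2))
  have hcg1 : ContDiff ℝ ∞ g1 := contDiff_const.mul (hc_phi hα 1)
  have hcφ : ContDiff ℝ ∞ φ := hc_phi hα 0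
  have hA : ContDiff ℝ ∞ (fun t : ℝ => t * g2 t) := contDiff_id.mul hcg2
  have hB : ContDiff ℝ ∞ (fun t : ℝ => (2*α+1) * g1 t) := contDiff_const.mul hcg1
  have hC' : ContDiff ℝ ∞ (fun t : ℝ => t * φ t) := contDiff_id.mul hcφ
  have hC : ContDiff ℝ ∞ (fun t : ℝ => q^2 * (t * φ t)) := contDiff_const.mul hC'
  have hBC : ContDiff ℝ ∞ (fun t : ℝ => (2*α+1) * g1 t + q^2 * (t * φ t)) := hB.add hC
  have hL : (fun t : ℝ => t * g2 t + ((2*α+1) * g1 t + q^2 * (t * φ t))) = fun _ => (0:ℝ) :=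
    funext fun t => ode_phi hα t
  have h0 : iteratedDeriv (n+1) (fun t : ℝ => t * g2 t + ((2*α+1) * g1 t + q^2 * (t * φ t))) 1
      = 0 := by rw [hL]; exact iter_zero (n+1) 1
  rw [iter_add hA hBC] at h0
  rw [iter_add hB hC] at h0
  rw [iter_id_mul hcg2 n 1] at h0
  rw [iter_cmul hcg1 (2*α+1)] at h0
  rw [iter_cmul hC' (q^2)] at h0
  rw [iter_id_mul hcφ n 1] at h0
  have e2 : ∀ m : ℕ, iteratedDeriv m g2 1 = iteratedDeriv (m+2) φ 1 := by
    intro m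
    rw [show m + 2 = (m+1)+1 by omega, iteratedDeriv_succ', iteratedDeriv_succ',
      hdd_phi hα]
  have e1 : ∀ m : ℕ, iteratedDeriv m g1 1 = iteratedDeriv (m+1) φ 1 := by
    intro m
    rw [iteratedDeriv_succ', hder_phi hα]
  rw [e2 (n+1), e2 n, e1 (n+1)] at h0
  push_cast at h0 ⊢
  have : n + 1 + 2 = n + 3 := by omega
  rw [this] at h0
  linarith [h0]

lemma D_base (hq : FF α 0 q = 0) :
    iteratedDeriv 2 (fun t : ℝ => FF α 0 (q*t)) 1
      + (2*α+1) * iteratedDeriv 1 (fun t : ℝ => FF α 0 (q*t)) 1 = 0 := by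
  have h := ode_phi (q := q) hα 1
  have e2 : iteratedDeriv 2 (fun t : ℝ => FF α 0 (q*t)) 1 = q * (q * FF α 2 (q*1)) := by
    rw [show (2:ℕ) = 1+1 by rfl, iteratedDeriv_succ', iteratedDeriv_one, hdd_phi hα]
  have e1 : iteratedDeriv 1 (fun t : ℝ => FF α 0 (q*t)) 1 = q * FF α 1 (q*1) := by
    rw [iteratedDeriv_one, hder_phi hα]
  rw [e2, e1]
  have hq1 : FF α 0 (q*1) = 0 := by rw [mul_one]; exact hq
  rw [hq1] at h
  linarith [h]

end Phi

section Key

variable {α q : ℝ} (hα : α > -1)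
include hα

lemma sum_ext (s r : ℕ) (h : s ≤ r) :
    ∑ j ∈ Finset.range r, QQ α s j * q^(2*j) = ∑ j ∈ Finset.range s, QQ α s j * q^(2*j) := by
  symm
  apply Finset.sum_subset (Finset.range_subset_range.2 h)
  intro j _ hj
  rw [Finset.mem_range, not_lt] at hj
  rw [QQ_support α s j (by omega)]
  ring

lemma key (hq : FF α 0 q = 0) (s : ℕ) :
    iteratedDeriv s (fun t : ℝ => FF α 0 (q*t)) 1
      = iteratedDeriv 1 (fun t : ℝ => FF α 0 (q*t)) 1
        * ∑ j ∈ Finset.range s, QQ α s j * q^(2*j) := by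
  induction s using Nat.strong_induction_on with
  | _ s ih =>
    match s with
    | 0 =>
      simp only [Finset.range_zero, Finset.sum_empty, mul_zero, iteratedDeriv_zero]
      rw [mul_one]; exact hq
    | 1 =>
      have : ∑ j ∈ Finset.range 1, QQ α 1 j * q^(2*j) = 1 := by
        simp [QQ]
      rw [this, mul_one]
    | 2 =>
      have hs : ∑ j ∈ Finset.range 2, QQ α 2 j * q^(2*j) = -(2*α+1) := by
        rw [Finset.sum_range_succ, Finset.sum_range_one]
        simp [QQ]
      rw [hs]
      have h1 := D_base hα hq
      linarith [h1]
    | (m+3) =>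
      have h2 := ih (m+2) (by omega)
      have h1 := ih (m+1) (by omega)
      have h0 := ih m (by omega)
      have hrec := D_rec (α := α) (q := q) hα m
      -- rewrite ih sums to bigger ranges
      have h2' : iteratedDeriv (m+2) (fun t : ℝ => FF α 0 (q*t)) 1
          = iteratedDeriv 1 (fun t : ℝ => FF α 0 (q*t)) 1
            * ∑ j ∈ Finset.range (m+3), QQ α (m+2) j * q^(2*j) := by
        rw [sum_ext hα (m+2) (m+3) (by omega)]; exact h2
      have h1' : iteratedDeriv (m+1) (fun t : ℝ => FF α 0 (q*t)) 1
          = iteratedDeriv 1 (fun t : ℝ => FF α 0 (q*t)) 1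
            * ∑ j ∈ Finset.range (m+2), QQ α (m+1) j * q^(2*j) := by
        rw [sum_ext hα (m+1) (m+2) (by omega)]; exact h1
      have h0' : iteratedDeriv m (fun t : ℝ => FF α 0 (q*t)) 1
          = iteratedDeriv 1 (fun t : ℝ => FF α 0 (q*t)) 1
            * ∑ j ∈ Finset.range (m+2), QQ α m j * q^(2*j) := by
        rw [sum_ext hα m (m+2) (by omega)]; exact h0
      have alg : ∑ j ∈ Finset.range (m+3), QQ α (m+3) j * q^(2*j)
          = -(((m:ℝ)+1)+(2*α+1)) * (∑ j ∈ Finset.range (m+3), QQ α (m+2) j * q^(2*j))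
            - (q^2 * ∑ j ∈ Finset.range (m+2), QQ α (m+1) j * q^(2*j)
               + ((m:ℝ)+1) * q^2 * ∑ j ∈ Finset.range (m+2), QQ α m j * q^(2*j)) := by
        have expand : ∀ j, QQ α (m+3) j * q^(2*j)
            = -(((m:ℝ)+1)+(2*α+1)) * (QQ α (m+2) j * q^(2*j))
              - (if j = 0 then 0 else
                  (QQ α (m+1) (j-1) + ((m:ℝ)+1) * QQ α m (j-1)) * q^(2*j)) := by
          intro j
          by_cases hj : j = 0
          · subst hj
            show QQ α (m+3) 0 * q^(2*0) = _
            simp only [QQ, if_pos rfl]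
            push_cast; ring
          · simp only [QQ, if_neg hj]
            push_cast; ring
        rw [Finset.sum_congr rfl (fun j _ => expand j), Finset.sum_sub_distrib]
        congr 1
        · rw [Finset.mul_sum]
        · rw [Finset.sum_range_succ' (fun j => if j = 0 then 0 else
            (QQ α (m+1) (j-1) + ((m:ℝ)+1) * QQ α m (j-1)) * q^(2*j)) (m+2)]
          simp only [Nat.succ_ne_zero, if_neg, Nat.add_sub_cancel, if_pos rfl, add_zero,
            if_true, if_false, ite_true, ite_false]
          norm_num
          rw [Finset.mul_sum, Finset.mul_sum, ← Finset.sum_add_distrib]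
          apply Finset.sum_congr rfl
          intro i _
          ring
      rw [h2', h1', h0'] at hrec
      rw [alg]
      push_cast at hrec ⊢
      linear_combination hrec

end Key

lemma sum_shrink (α q : ℝ) (s r r' : ℕ) (h : r' ≤ r) (hs : ∀ j, r' ≤ j → s < 2*j+1) :
    ∑ j ∈ Finset.range r, QQ α s j * q^(2*j) = ∑ j ∈ Finset.range r', QQ α s j * q^(2*j) := by
  symm
  apply Finset.sum_subset (Finset.range_subset_range.2 h)
  intro j _ hj
  rw [Finset.mem_range, not_lt] at hj
  rw [QQ_support α s j (hs j hj)]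
  ring


/-- There are coefficients `a_{kj}`, `b_{kj}` depending only on `α` (not on `q`),
with `a_{kk} = (-1)^k`, such that for every positive zero `q` of `j_α` and
`φ(t) = j_α(qt)`: `φ^{(2k+1)}(1) = φ'(1) Σ_{j=0}^k a_{kj} q^{2j}` and
`φ^{(2k+2)}(1) = φ'(1) Σ_{j=0}^k b_{kj} q^{2j}`. -/
theorem besselJ_odd_even_derivatives (α : ℝ) (hα : α > -1) :
    ∃ a b : ℕ → ℕ → ℝ, (∀ k, a k k = (-1 : ℝ) ^ k) ∧
      ∀ q : ℝ, 0 < q → besselJ α q = 0 → ∀ k : ℕ,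
        iteratedDeriv (2 * k + 1) (fun t : ℝ => besselJ α (q * t)) 1 =
          deriv (fun t : ℝ => besselJ α (q * t)) 1 *
            ∑ j ∈ Finset.range (k + 1), a k j * q ^ (2 * j) ∧
        iteratedDeriv (2 * k + 2) (fun t : ℝ => besselJ α (q * t)) 1 =
          deriv (fun t : ℝ => besselJ α (q * t)) 1 *
            ∑ j ∈ Finset.range (k + 1), b k j * q ^ (2 * j) := by
  refine ⟨fun k j => QQ α (2*k+1) j, fun k j => QQ α (2*k+2) j, fun k => QQ_diag α k, ?_⟩
  intro q _ hq k
  have hq' : FF α 0 q = 0 := by rw [← besselJ_eq]; exact hq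
  have hfun : (fun t : ℝ => besselJ α (q * t)) = fun t : ℝ => FF α 0 (q*t) := by
    funext t; rw [besselJ_eq]
  rw [hfun]
  rw [show deriv (fun t : ℝ => FF α 0 (q*t)) 1
      = iteratedDeriv 1 (fun t : ℝ => FF α 0 (q*t)) 1 from congrFun (iteratedDeriv_one).symm 1]
  constructor
  · rw [key hα hq' (2*k+1)]
    congr 1
    exact sum_shrink α q (2*k+1) (2*k+1) (k+1) (by omega) (fun j hj => by omega)
  · rw [key hα hq' (2*k+2)]
    congr 1
    exact sum_shrink α q (2*k+2) (2*k+2) (k+1) (by omega) (fun j hj => by omega)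
end

section
/- For α ≥ -1/2 and m ∈ ℕ, the function f_{α,m}(λ) = j_α(λ)² / ∏_{k=1}^{m+1}(1 - λ²/q_{α,k}²) extends to an even entire function of exponential type 2, and its restriction to [0,∞) satisfies f_{α,m}(λ) = O(λ^{-2α-2m-3}) as λ → ∞; in particular ∫_0^∞ λ^{2m} |f_{α,m}(λ)| λ^{2α+1} dλ < ∞. -/
open Finset

namespace BesselAux

lemma summable_fac (R : ℝ) (hR : 0 ≤ R) :
    Summable (fun k : ℕ => R ^ k / ((2 * k).factorial : ℝ)) := by
  have h := (Real.summable_pow_div_factorial (Real.sqrt R)).comp_injective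
    (fun a b hab => by dsimp only at hab; omega : Function.Injective (fun k : ℕ => 2 * k))
  refine h.congr fun k => ?_
  simp only [Function.comp_apply]
  rw [pow_mul, Real.sq_sqrt hR]

lemma fb1 (k : ℕ) : ((k : ℝ) + 1) * (((2 * (k + 1)).factorial : ℝ))⁻¹ ≤
    (((2 * k).factorial : ℝ))⁻¹ := by
  have h2 : ((2 * (k + 1)).factorial : ℝ)
      = (2 * k + 2) * ((2 * k + 1) * ((2 * k).factorial : ℝ)) := by
    have : 2 * (k + 1) = (2 * k + 1) + 1 := by ring
    rw [this, Nat.factorial_succ, Nat.factorial_succ]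
    push_cast; ring
  have hF : (0:ℝ) < ((2 * k).factorial : ℝ) := by positivity
  rw [h2, inv_eq_one_div, inv_eq_one_div, mul_one_div, div_le_div_iff₀ (by positivity) hF]
  nlinarith [hF]

variable {𝕜 : Type*} [RCLike 𝕜]

lemma deriv_coeff_bound (c : ℕ → 𝕜)
    (hb : ∀ k, ‖c k‖ ≤ (((2 * k).factorial : ℝ))⁻¹) (k : ℕ) :
    ‖((k : 𝕜) + 1) * c (k + 1)‖ ≤ (((2 * k).factorial : ℝ))⁻¹ := by
  rw [norm_mul]
  have h1 : ‖((k : 𝕜) + 1)‖ = (k : ℝ) + 1 := by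
    rw [show ((k : 𝕜) + 1) = (((k + 1 : ℕ) : 𝕜)) by push_cast; ring, RCLike.norm_natCast]
    push_cast; ring
  rw [h1]
  calc ((k:ℝ) + 1) * ‖c (k + 1)‖ ≤ ((k:ℝ) + 1) * (((2 * (k+1)).factorial : ℝ))⁻¹ :=
        mul_le_mul_of_nonneg_left (hb _) (by positivity)
    _ ≤ _ := fb1 k

lemma summable_bound (c : ℕ → 𝕜)
    (hb : ∀ k, ‖c k‖ ≤ (((2 * k).factorial : ℝ))⁻¹) (w : 𝕜) :
    Summable (fun k => c k * w ^ k) := by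
  refine Summable.of_norm_bounded (summable_fac ‖w‖ (norm_nonneg _)) fun k => ?_
  rw [norm_mul, norm_pow, div_eq_inv_mul]
  exact mul_le_mul_of_nonneg_right (hb k) (by positivity)

lemma hasDerivAt_tsum_pow (c : ℕ → 𝕜)
    (hb : ∀ k, ‖c k‖ ≤ (((2 * k).factorial : ℝ))⁻¹) (w : 𝕜) :
    HasDerivAt (fun z => ∑' k, c k * z ^ k)
      (∑' k : ℕ, ((k : 𝕜) + 1) * c (k + 1) * w ^ k) w := by
  set R : ℝ := ‖w‖ + 1 with hRdef
  have hwR : w ∈ Metric.ball (0 : 𝕜) R := by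
    simp [hRdef, Metric.mem_ball, dist_zero_right]
  have hR0 : (0:𝕜) ∈ Metric.ball (0 : 𝕜) R := by
    simp [hRdef, Metric.mem_ball]; positivity
  have hR1 : (1:ℝ) ≤ R := by simp [hRdef]
  have hRpos : (0:ℝ) < R := lt_of_lt_of_le one_pos hR1
  have hu : Summable (fun k : ℕ => (k:ℝ) * (((2 * k).factorial : ℝ))⁻¹ * R ^ k) := by
    rw [← summable_nat_add_iff 1]
    refine Summable.of_nonneg_of_le (fun k => by positivity) (fun k => ?_)
      ((summable_fac R hRpos.le).mul_left R)
    have h1 := fb1 k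
    have h2 : ((k:ℝ) + 1) * (((2 * (k + 1)).factorial : ℝ))⁻¹ * R ^ (k + 1)
        ≤ (((2 * k).factorial : ℝ))⁻¹ * R ^ (k + 1) :=
      mul_le_mul_of_nonneg_right h1 (by positivity)
    calc ((k + 1 : ℕ):ℝ) * (((2 * (k + 1)).factorial : ℝ))⁻¹ * R ^ (k + 1)
        = ((k:ℝ) + 1) * (((2 * (k + 1)).factorial : ℝ))⁻¹ * R ^ (k + 1) := by push_cast; ring
      _ ≤ (((2 * k).factorial : ℝ))⁻¹ * R ^ (k + 1) := h2
      _ = R * (R ^ k / ((2 * k).factorial : ℝ)) := by rw [pow_succ]; ring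
  have hbound : ∀ (n : ℕ) (y : 𝕜), y ∈ Metric.ball (0:𝕜) R →
      ‖c n * ((n:𝕜) * y ^ (n - 1))‖ ≤ (n:ℝ) * (((2 * n).factorial : ℝ))⁻¹ * R ^ n := by
    intro n y hy
    have hyR : ‖y‖ ≤ R := by
      rw [Metric.mem_ball, dist_zero_right] at hy; exact hy.le
    have hpow : ‖y‖ ^ (n - 1) ≤ R ^ n :=
      le_trans (pow_le_pow_left₀ (norm_nonneg y) hyR (n - 1))
        (pow_le_pow_right₀ hR1 (Nat.sub_le n 1))
    have hnat : ‖((n:𝕜))‖ = (n:ℝ) := RCLike.norm_natCast n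
    calc ‖c n * ((n:𝕜) * y ^ (n - 1))‖ = ‖c n‖ * ((n:ℝ) * ‖y‖ ^ (n - 1)) := by
          rw [norm_mul, norm_mul, norm_pow, hnat]
      _ ≤ (((2 * n).factorial : ℝ))⁻¹ * ((n:ℝ) * R ^ n) := by
          refine mul_le_mul (hb n) (mul_le_mul_of_nonneg_left hpow (by positivity))
            (by positivity) (by positivity)
      _ = (n:ℝ) * (((2 * n).factorial : ℝ))⁻¹ * R ^ n := by ring
  have key : HasDerivAt (fun z => ∑' k : ℕ, c k * z ^ k)
      (∑' n : ℕ, c n * ((n:𝕜) * w ^ (n - 1))) w := by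
    refine hasDerivAt_tsum_of_isPreconnected hu Metric.isOpen_ball
      (convex_ball (0:𝕜) R).isPreconnected
      (fun n y _ => (hasDerivAt_pow n y).const_mul (c n)) hbound hR0 ?_ hwR
    exact summable_bound c hb 0
  have hSsum : Summable (fun n : ℕ => c n * ((n:𝕜) * w ^ (n - 1))) :=
    Summable.of_norm_bounded hu (fun n => hbound n w hwR)
  have hre : (∑' n : ℕ, c n * ((n:𝕜) * w ^ (n - 1)))
      = ∑' k : ℕ, ((k : 𝕜) + 1) * c (k + 1) * w ^ k := by
    rw [Summable.tsum_eq_zero_add hSsum]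
    simp only [Nat.cast_zero, zero_mul, mul_zero, zero_add]
    refine tsum_congr fun k => ?_
    push_cast
    ring_nf
  rw [← hre]
  exact key

lemma tsum_exp_bound (c : ℕ → 𝕜)
    (hb : ∀ k, ‖c k‖ ≤ (((2 * k).factorial : ℝ))⁻¹) (w : 𝕜) :
    ‖∑' k : ℕ, c k * w ^ k‖ ≤ Real.exp (Real.sqrt ‖w‖) := by
  have h1 : ‖∑' k : ℕ, c k * w ^ k‖ ≤ ∑' k : ℕ, ‖w‖ ^ k / ((2 * k).factorial : ℝ) := by
    refine tsum_of_norm_bounded (summable_fac ‖w‖ (norm_nonneg w)).hasSum fun k => ?_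
    rw [norm_mul, norm_pow, div_eq_inv_mul]
    exact mul_le_mul_of_nonneg_right (hb k) (by positivity)
  have h2 : (∑' k : ℕ, ‖w‖ ^ k / ((2 * k).factorial : ℝ))
      ≤ ∑' n : ℕ, Real.sqrt ‖w‖ ^ n / (n.factorial : ℝ) := by
    have h3 := tsum_comp_le_tsum_of_inj (Real.summable_pow_div_factorial (Real.sqrt ‖w‖))
      (fun n => by positivity)
      (fun a b hab => by dsimp only at hab; omega : Function.Injective (fun k : ℕ => 2 * k))
    refine le_trans (le_of_eq (tsum_congr fun k => ?_)) h3
    simp only [Function.comp_apply]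
    rw [pow_mul, Real.sq_sqrt (norm_nonneg w)]
  have h4 : (∑' n : ℕ, Real.sqrt ‖w‖ ^ n / (n.factorial : ℝ)) = Real.exp (Real.sqrt ‖w‖) := by
    rw [Real.exp_eq_exp_ℝ, NormedSpace.exp_eq_tsum ℝ]
    simp [smul_eq_mul, div_eq_inv_mul]
  linarith

/-- extracted summability of `k * R^k/(2k)!` -/
lemma summable_kfac (R : ℝ) (hR : 0 ≤ R) :
    Summable (fun k : ℕ => (k:ℝ) * (((2 * k).factorial : ℝ))⁻¹ * R ^ k) := by
  rw [← summable_nat_add_iff 1]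
  refine Summable.of_nonneg_of_le (fun k => by positivity) (fun k => ?_)
    ((summable_fac R hR).mul_left R)
  have h1 := fb1 k
  calc ((k + 1 : ℕ):ℝ) * (((2 * (k + 1)).factorial : ℝ))⁻¹ * R ^ (k + 1)
      = ((k:ℝ) + 1) * (((2 * (k + 1)).factorial : ℝ))⁻¹ * R ^ (k + 1) := by push_cast; ring
    _ ≤ (((2 * k).factorial : ℝ))⁻¹ * R ^ (k + 1) :=
        mul_le_mul_of_nonneg_right h1 (by positivity)
    _ = R * (R ^ k / ((2 * k).factorial : ℝ)) := by rw [pow_succ]; ring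

section coeffs

/-- Bessel power series coefficients. -/
noncomputable def cR (α : ℝ) (k : ℕ) : ℝ :=
  (-1) ^ k * Real.Gamma (α + 1) / (4 ^ k * k.factorial * Real.Gamma ((k:ℝ) + α + 1))

variable {α : ℝ} (hα : -1/2 ≤ α)
include hα

lemma Γpos (k : ℕ) : 0 < Real.Gamma ((k:ℝ) + α + 1) := by
  apply Real.Gamma_pos_of_pos
  have : (0:ℝ) ≤ (k:ℝ) := Nat.cast_nonneg k
  linarith

lemma Γpos0 : 0 < Real.Gamma (α + 1) := by
  have := Γpos (α := α) hα 0
  simpa using this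

lemma Γsucc (k : ℕ) : Real.Gamma (((k+1:ℕ):ℝ) + α + 1)
    = ((k:ℝ) + α + 1) * Real.Gamma ((k:ℝ) + α + 1) := by
  have hne : ((k:ℝ) + α + 1) ≠ 0 := ne_of_gt (by
    have : (0:ℝ) ≤ (k:ℝ) := Nat.cast_nonneg k; linarith)
  have h := Real.Gamma_add_one hne
  rw [← h]; congr 1; push_cast; ring

lemma cR_rec (k : ℕ) :
    4 * ((k:ℝ) + 1) * ((k:ℝ) + α + 1) * cR α (k + 1) + cR α k = 0 := by
  have hΓ := Γpos hα k
  have hΓs := Γsucc hα k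
  have hne : ((k:ℝ) + α + 1) ≠ 0 := ne_of_gt (by
    have : (0:ℝ) ≤ (k:ℝ) := Nat.cast_nonneg k; linarith)
  have hfac : ((k+1).factorial : ℝ) = ((k:ℝ) + 1) * (k.factorial : ℝ) := by
    rw [Nat.factorial_succ]; push_cast; ring
  simp only [cR, hΓs, hfac, pow_succ]
  have h4 : (4:ℝ)^k ≠ 0 := by positivity
  have hf : (k.factorial : ℝ) ≠ 0 := by positivity
  have hk1 : ((k:ℝ) + 1) ≠ 0 := by positivity
  field_simp
  ring

lemma Γ_prod (k : ℕ) : Real.Gamma ((k:ℝ) + α + 1)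
    = Real.Gamma (α + 1) * ∏ j ∈ Finset.range k, (α + (j:ℝ) + 1) := by
  induction k with
  | zero => simp
  | succ n ih =>
    rw [Γsucc hα n] at *
    rw [Finset.prod_range_succ, ih]
    ring

lemma facprod (k : ℕ) :
    (4:ℝ) ^ k * (k.factorial : ℝ) * ∏ j ∈ Finset.range k, ((j:ℝ) + 1/2)
      = ((2 * k).factorial : ℝ) := by
  induction k with
  | zero => simp
  | succ n ih =>
    have h2 : (2 * (n + 1)) = (2 * n + 1) + 1 := by ring
    rw [Finset.prod_range_succ, h2, Nat.factorial_succ, Nat.factorial_succ,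
      Nat.factorial_succ, pow_succ]
    push_cast
    push_cast at ih
    linear_combination (4*((n:ℝ)+1)*((n:ℝ)+1/2)) * ih

lemma cR_bound (k : ℕ) : |cR α k| ≤ (((2 * k).factorial : ℝ))⁻¹ := by
  have hΓ := Γpos hα k
  have hΓ0 := Γpos0 hα
  have habs : |cR α k| = Real.Gamma (α + 1) /
      (4 ^ k * (k.factorial : ℝ) * Real.Gamma ((k:ℝ) + α + 1)) := by
    rw [cR, abs_div, abs_mul, abs_pow, abs_neg, abs_one, one_pow, one_mul,
      abs_of_pos hΓ0, abs_of_pos (by positivity)]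
  have hprod : (∏ j ∈ Finset.range k, ((j:ℝ) + 1/2)) ≤ ∏ j ∈ Finset.range k, (α + (j:ℝ) + 1) :=
    Finset.prod_le_prod (fun j _ => by positivity) (fun j _ => by linarith)
  have key : ((2 * k).factorial : ℝ)
      ≤ 4 ^ k * (k.factorial : ℝ) * ∏ j ∈ Finset.range k, (α + (j:ℝ) + 1) := by
    rw [← facprod hα k]
    exact mul_le_mul_of_nonneg_left hprod (by positivity)
  have hP : 0 < ∏ j ∈ Finset.range k, (α + (j:ℝ) + 1) :=
    Finset.prod_pos (fun j _ => by have : (0:ℝ) ≤ (j:ℝ) := Nat.cast_nonneg j; linarith)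
  have hden : (0:ℝ) < 4 ^ k * (k.factorial : ℝ)
      * (Real.Gamma (α + 1) * ∏ j ∈ Finset.range k, (α + (j:ℝ) + 1)) := by positivity
  rw [habs, Γ_prod hα k, div_le_iff₀ hden, inv_mul_eq_div,
    le_div_iff₀ (by positivity : (0:ℝ) < ((2*k).factorial : ℝ))]
  nlinarith [mul_le_mul_of_nonneg_left key hΓ0.le,
    mul_pos (pow_pos (by norm_num : (0:ℝ) < 4) k)
      (Nat.cast_pos.mpr (Nat.factorial_pos k))]

noncomputable def d1 (α : ℝ) (k : ℕ) : ℝ := ((k:ℝ) + 1) * cR α (k + 1)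

noncomputable def d2 (α : ℝ) (k : ℕ) : ℝ := ((k:ℝ) + 1) * d1 α (k + 1)

noncomputable def eR (α : ℝ) (w : ℝ) : ℝ := ∑' k : ℕ, cR α k * w ^ k

noncomputable def e1 (α : ℝ) (w : ℝ) : ℝ := ∑' k : ℕ, d1 α k * w ^ k

noncomputable def e2 (α : ℝ) (w : ℝ) : ℝ := ∑' k : ℕ, d2 α k * w ^ k

lemma cR_bound' (k : ℕ) : ‖cR α k‖ ≤ (((2 * k).factorial : ℝ))⁻¹ := by
  rw [Real.norm_eq_abs]; exact cR_bound hα k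

lemma d1_bound (k : ℕ) : ‖d1 α k‖ ≤ (((2 * k).factorial : ℝ))⁻¹ :=
  deriv_coeff_bound (𝕜 := ℝ) (cR α) (cR_bound' hα) k

lemma d2_bound (k : ℕ) : ‖d2 α k‖ ≤ (((2 * k).factorial : ℝ))⁻¹ :=
  deriv_coeff_bound (𝕜 := ℝ) (d1 α) (d1_bound hα) k

lemma hasDerivAt_eR (w : ℝ) : HasDerivAt (eR α) (e1 α w) w := by
  have h := hasDerivAt_tsum_pow (𝕜 := ℝ) (cR α) (cR_bound' hα) w
  exact h

lemma hasDerivAt_e1 (w : ℝ) : HasDerivAt (e1 α) (e2 α w) w := by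
  have h := hasDerivAt_tsum_pow (𝕜 := ℝ) (d1 α) (d1_bound hα) w
  exact h

lemma ode (w : ℝ) : 4 * w * e2 α w + (4 * α + 4) * e1 α w + eR α w = 0 := by
  have hs0 : Summable (fun k : ℕ => cR α k * w ^ k) := summable_bound _ (cR_bound' hα) w
  have hs1 : Summable (fun k : ℕ => d1 α k * w ^ k) := summable_bound _ (d1_bound hα) w
  have hst : Summable (fun k : ℕ => 4 * (k:ℝ) * d1 α k * w ^ k) := by
    refine Summable.of_norm_bounded (((summable_kfac |w| (abs_nonneg w)).mul_left 4)) fun k => ?_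
    have h1 : ‖4 * (k:ℝ) * d1 α k * w ^ k‖ = 4 * (k:ℝ) * ‖d1 α k‖ * |w| ^ k := by
      rw [norm_mul, norm_mul, norm_mul, norm_pow, Real.norm_eq_abs w, Real.norm_eq_abs (4:ℝ),
        Real.norm_eq_abs ((k:ℝ)), abs_of_nonneg (by norm_num : (0:ℝ) ≤ 4),
        abs_of_nonneg (Nat.cast_nonneg k)]
    rw [h1]
    calc 4 * (k:ℝ) * ‖d1 α k‖ * |w| ^ k
        ≤ 4 * (k:ℝ) * (((2 * k).factorial : ℝ))⁻¹ * |w| ^ k := by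
          refine mul_le_mul_of_nonneg_right (mul_le_mul_of_nonneg_left (d1_bound hα k)
            (by positivity)) (by positivity)
      _ = 4 * ((k:ℝ) * (((2 * k).factorial : ℝ))⁻¹ * |w| ^ k) := by ring
  have hshift : ∀ k : ℕ, (4 * w) * (d2 α k * w ^ k)
      = 4 * ((k+1:ℕ):ℝ) * d1 α (k+1) * w ^ (k+1) := by
    intro k
    simp only [d2]
    push_cast
    ring
  have h4w : 4 * w * e2 α w = ∑' k : ℕ, 4 * (k:ℝ) * d1 α k * w ^ k := by
    calc 4 * w * e2 α w = ∑' k : ℕ, (4 * w) * (d2 α k * w ^ k) := by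
          rw [e2, tsum_mul_left]
      _ = ∑' k : ℕ, 4 * ((k+1:ℕ):ℝ) * d1 α (k+1) * w ^ (k+1) := tsum_congr hshift
      _ = ∑' k : ℕ, 4 * (k:ℝ) * d1 α k * w ^ k := by
          rw [Summable.tsum_eq_zero_add hst]
          simp
  have h1 : (4 * α + 4) * e1 α w = ∑' k : ℕ, (4 * α + 4) * (d1 α k * w ^ k) := by
    rw [e1, tsum_mul_left]
  rw [h4w, h1, eR, ← Summable.tsum_add hst (hs1.mul_left _), ← Summable.tsum_add (hst.add (hs1.mul_left _)) hs0]
  rw [show (0:ℝ) = ∑' (_ : ℕ), (0:ℝ) by rw [tsum_zero]]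
  refine tsum_congr fun k => ?_
  have hrec := cR_rec hα k
  simp only [d1]
  linear_combination (w ^ k) * hrec

lemma eR_bound (w : ℝ) : |eR α w| ≤ Real.exp (Real.sqrt |w|) := by
  have h := tsum_exp_bound (𝕜 := ℝ) (cR α) (cR_bound' hα) w
  simpa [eR, Real.norm_eq_abs] using h

lemma besselJ_eq_eR (x : ℝ) : besselJ α x = eR α (x ^ 2) := by
  rw [besselJ, eR]
  refine tsum_congr fun k => ?_
  have hΓ := Γpos hα k
  have h2 : (x / 2) ^ (2 * k) = (x ^ 2) ^ k / 4 ^ k := by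
    rw [pow_mul, div_pow, show ((2:ℝ))^2 = 4 by norm_num, div_pow]
  rw [h2, cR]
  have h4 : ((4:ℝ))^k ≠ 0 := by positivity
  have hf : ((k.factorial : ℝ)) ≠ 0 := by positivity
  field_simp
  try ring
  try exact Or.inl trivial

set_option maxHeartbeats 2000000 in
lemma eR_decay : ∃ K : ℝ, 0 < K ∧ ∀ x : ℝ, 1 ≤ x →
    |eR α (x ^ 2)| ≤ K * x ^ (-(α + 1/2)) := by
  classical
  set c0 : ℝ := |α ^ 2 - 1/4| with hc0def
  set g : ℝ → ℝ := fun x => x ^ (α + 1/2) * eR α (x ^ 2) with hgdef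
  set g1 : ℝ → ℝ := fun x =>
    (α + 1/2) * x ^ (α - 1/2) * eR α (x ^ 2) + 2 * x ^ (α + 3/2) * e1 α (x ^ 2) with hg1def
  set g2 : ℝ → ℝ := fun x =>
    (α ^ 2 - 1/4) * x ^ (α - 3/2) * eR α (x ^ 2) + (4 * α + 4) * x ^ (α + 1/2) * e1 α (x ^ 2)
      + 4 * x ^ (α + 5/2) * e2 α (x ^ 2) with hg2def
  set h : ℝ → ℝ := fun x => g x ^ 2 + g1 x ^ 2 with hhdef
  set φ : ℝ → ℝ := fun x => h x * Real.exp (c0 / x) with hφdef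
  -- powers of x in terms of x^(α-3/2)
  have hpow : ∀ x : ℝ, 0 < x →
      x ^ (α - 1/2) = x ^ (α - 3/2) * x ∧ x ^ (α + 1/2) = x ^ (α - 3/2) * x ^ 2 ∧
      x ^ (α + 3/2) = x ^ (α - 3/2) * x ^ 3 ∧ x ^ (α + 5/2) = x ^ (α - 3/2) * x ^ 4 := by
    intro x hx
    have h1 : x ^ (α - 1/2) = x ^ (α - 3/2) * x := by
      rw [show α - 1/2 = (α - 3/2) + 1 by ring, Real.rpow_add_one hx.ne']
    have h2 : x ^ (α + 1/2) = x ^ (α - 1/2) * x := by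
      rw [show α + 1/2 = (α - 1/2) + 1 by ring, Real.rpow_add_one hx.ne']
    have h3 : x ^ (α + 3/2) = x ^ (α + 1/2) * x := by
      rw [show α + 3/2 = (α + 1/2) + 1 by ring, Real.rpow_add_one hx.ne']
    have h4 : x ^ (α + 5/2) = x ^ (α + 3/2) * x := by
      rw [show α + 5/2 = (α + 3/2) + 1 by ring, Real.rpow_add_one hx.ne']
    refine ⟨h1, ?_, ?_, ?_⟩
    · rw [h2, h1]; ring
    · rw [h3, h2, h1]; ring
    · rw [h4, h3, h2, h1]; ring
  have husq : ∀ x : ℝ, HasDerivAt (fun y : ℝ => eR α (y ^ 2)) (e1 α (x ^ 2) * (2 * x)) x := by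
    intro x
    have := (hasDerivAt_eR hα (x ^ 2)).comp x (hasDerivAt_pow 2 x)
    simpa [Function.comp_def] using this
  have hvsq : ∀ x : ℝ, HasDerivAt (fun y : ℝ => e1 α (y ^ 2)) (e2 α (x ^ 2) * (2 * x)) x := by
    intro x
    have := (hasDerivAt_e1 hα (x ^ 2)).comp x (hasDerivAt_pow 2 x)
    simpa [Function.comp_def] using this
  have hgd : ∀ x : ℝ, 0 < x → HasDerivAt g (g1 x) x := by
    intro x hx
    have hrp := Real.hasDerivAt_rpow_const (x := x) (p := α + 1/2) (Or.inl hx.ne')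
    have H := hrp.mul (husq x)
    refine H.congr_deriv ?_
    obtain ⟨h1, h2, h3, h4⟩ := hpow x hx
    simp only [hg1def]
    rw [show α + 1/2 - 1 = α - 1/2 by ring, h1, h2, h3]
    ring
  have hg1d : ∀ x : ℝ, 0 < x → HasDerivAt g1 (g2 x) x := by
    intro x hx
    have hrp1 := Real.hasDerivAt_rpow_const (x := x) (p := α - 1/2) (Or.inl hx.ne')
    have hrp3 := Real.hasDerivAt_rpow_const (x := x) (p := α + 3/2) (Or.inl hx.ne')
    have H := ((hrp1.mul (husq x)).const_mul (α + 1/2)).add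
      ((hrp3.mul (hvsq x)).const_mul 2)
    obtain ⟨h1, h2, h3, h4⟩ := hpow x hx
    convert H using 1
    · rfl
    · rfl
    · funext y
      simp only [hg1def, Pi.add_apply, Pi.mul_apply]
      ring
    · simp only [hg2def]
      rw [show α - 1/2 - 1 = α - 3/2 by ring, show α + 3/2 - 1 = α + 1/2 by ring,
        h1, h2, h3, h4]
      ring
  have hkey : ∀ x : ℝ, 0 < x → g2 x + g x = (α ^ 2 - 1/4) / x ^ 2 * g x := by
    intro x hx
    obtain ⟨h1, h2, h3, h4⟩ := hpow x hx
    have hode := ode hα (x ^ 2)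
    have hx2 : (x:ℝ) ^ 2 ≠ 0 := by positivity
    have hrhs : (α ^ 2 - 1/4) / x ^ 2 * g x = (α ^ 2 - 1/4) * x ^ (α - 3/2) * eR α (x ^ 2) := by
      simp only [hgdef]
      rw [h2]
      field_simp
    rw [hrhs]
    simp only [hg2def, hgdef]
    rw [h2, h4]
    linear_combination (x ^ (α - 3/2) * x ^ 2) * hode
  have hhd : ∀ x : ℝ, 0 < x →
      HasDerivAt h (2 * g x * g1 x + 2 * g1 x * g2 x) x := by
    intro x hx
    have H := ((hgd x hx).pow 2).add ((hg1d x hx).pow 2)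
    refine H.congr_deriv ?_
    ring
  have hφd : ∀ x : ℝ, 0 < x → HasDerivAt φ
      ((2 * g x * g1 x + 2 * g1 x * g2 x) * Real.exp (c0 / x)
        + h x * (Real.exp (c0 / x) * (c0 * -((x ^ 2)⁻¹)))) x := by
    intro x hx
    have hexp : HasDerivAt (fun y : ℝ => Real.exp (c0 / y))
        (Real.exp (c0 / x) * (c0 * -((x ^ 2)⁻¹))) x := by
      have hinner : HasDerivAt (fun y : ℝ => c0 / y) (c0 * -((x ^ 2)⁻¹)) x := by
        simpa [div_eq_mul_inv] using (hasDerivAt_inv hx.ne').const_mul c0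
      have hcomp := (Real.hasDerivAt_exp (c0 / x)).comp x hinner
      simpa [Function.comp_def] using hcomp
    exact (hhd x hx).mul hexp
  have hφnonpos : ∀ x : ℝ, 1 ≤ x →
      (2 * g x * g1 x + 2 * g1 x * g2 x) * Real.exp (c0 / x)
        + h x * (Real.exp (c0 / x) * (c0 * -((x ^ 2)⁻¹))) ≤ 0 := by
    intro x hx1
    have hx : (0:ℝ) < x := lt_of_lt_of_le one_pos hx1
    have hx2 : (0:ℝ) < x ^ 2 := by positivity
    have hgg2 : g2 x = (α ^ 2 - 1/4) / x ^ 2 * g x - g x := by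
      have := hkey x hx; linarith
    have hd : 2 * g x * g1 x + 2 * g1 x * g2 x ≤ c0 / x ^ 2 * h x := by
      rw [hgg2]
      have hA1 : α ^ 2 - 1/4 ≤ c0 := le_abs_self _
      have hA2 : -(α ^ 2 - 1/4) ≤ c0 := neg_le_abs _
      rw [div_mul_eq_mul_div, div_mul_eq_mul_div, ← sub_nonneg, hhdef]
      have expand : c0 * (g x ^ 2 + g1 x ^ 2) / x ^ 2
          - (2 * g x * g1 x + 2 * g1 x * ((α ^ 2 - 1/4) * g x / x ^ 2 - g x))
          = (c0 * (g x ^ 2 + g1 x ^ 2) - 2 * (α ^ 2 - 1/4) * g x * g1 x) / x ^ 2 := by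
        field_simp
        ring
      rw [expand]
      apply div_nonneg _ hx2.le
      nlinarith [mul_nonneg (by linarith : (0:ℝ) ≤ c0 + (α ^ 2 - 1/4)) (sq_nonneg (g x - g1 x)),
        mul_nonneg (by linarith : (0:ℝ) ≤ c0 - (α ^ 2 - 1/4)) (sq_nonneg (g x + g1 x))]
    have hexp_pos : (0:ℝ) < Real.exp (c0 / x) := Real.exp_pos _
    have hh_nonneg : 0 ≤ h x := by positivity
    have e1' : h x * (Real.exp (c0 / x) * (c0 * -((x ^ 2)⁻¹)))
        = -(c0 / x ^ 2 * h x * Real.exp (c0 / x)) := by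
      field_simp
    rw [e1']
    have := mul_le_mul_of_nonneg_right hd hexp_pos.le
    linarith
  have hanti : AntitoneOn φ (Set.Ici (1:ℝ)) := by
    refine antitoneOn_of_deriv_nonpos (convex_Ici 1) ?_ ?_ ?_
    · intro x hx
      have hx0 : (0:ℝ) < x := lt_of_lt_of_le one_pos hx
      exact (hφd x hx0).differentiableAt.continuousAt.continuousWithinAt
    · intro x hx
      rw [interior_Ici] at hx
      exact ((hφd x (lt_of_lt_of_le one_pos (le_of_lt hx))).differentiableAt).differentiableWithinAt
    · intro x hx
      rw [interior_Ici] at hx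
      have hx0 : (0:ℝ) < x := lt_of_lt_of_le one_pos hx.le
      rw [(hφd x hx0).deriv]
      exact hφnonpos x hx.le
  set M : ℝ := h 1 * Real.exp c0 + 1 with hMdef
  have hM1 : (1:ℝ) ≤ M := by
    have : 0 ≤ h 1 * Real.exp c0 := mul_nonneg (by positivity) (Real.exp_pos _).le
    simp only [hMdef]; linarith
  have hgsq : ∀ x : ℝ, 1 ≤ x → g x ^ 2 ≤ M := by
    intro x hx1
    have hx : (0:ℝ) < x := lt_of_lt_of_le one_pos hx1
    have h1 : φ x ≤ φ 1 := hanti (Set.mem_Ici.mpr le_rfl) (Set.mem_Ici.mpr hx1) hx1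
    have h2 : h x ≤ φ x := by
      have hone : (1:ℝ) ≤ Real.exp (c0 / x) := by
        apply Real.one_le_exp
        positivity
      have := mul_le_mul_of_nonneg_left hone (by positivity : (0:ℝ) ≤ h x)
      simpa [hφdef] using this
    have h3 : φ 1 = h 1 * Real.exp c0 := by simp [hφdef]
    have h4 : g x ^ 2 ≤ h x := by
      simp only [hhdef]; nlinarith [sq_nonneg (g1 x)]
    simp only [hMdef]
    linarith
  refine ⟨Real.sqrt M, Real.sqrt_pos.mpr (by linarith), ?_⟩
  intro x hx1
  have hx : (0:ℝ) < x := lt_of_lt_of_le one_pos hx1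
  have hgle : |g x| ≤ Real.sqrt M := by
    rw [← Real.sqrt_sq_eq_abs]
    exact Real.sqrt_le_sqrt (hgsq x hx1)
  have hrp_pos : (0:ℝ) < x ^ (α + 1/2) := Real.rpow_pos_of_pos hx _
  have heq : eR α (x ^ 2) = g x * x ^ (-(α + 1/2)) := by
    rw [hgdef]
    simp only
    rw [Real.rpow_neg hx.le, mul_assoc, mul_comm (eR α (x ^ 2)), ← mul_assoc,
      mul_inv_cancel₀ (ne_of_gt hrp_pos), one_mul]
  rw [heq, abs_mul, abs_of_pos (Real.rpow_pos_of_pos hx _)]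
  exact mul_le_mul_of_nonneg_right hgle (Real.rpow_pos_of_pos hx _).le

noncomputable def Ec (α : ℝ) (w : ℂ) : ℂ := ∑' k : ℕ, ((cR α k : ℝ) : ℂ) * w ^ k

lemma cC_bound (k : ℕ) : ‖((cR α k : ℝ) : ℂ)‖ ≤ (((2 * k).factorial : ℝ))⁻¹ := by
  rw [Complex.norm_real]; exact cR_bound' hα k

lemma Ec_diff : Differentiable ℂ (Ec α) := fun w =>
  (hasDerivAt_tsum_pow (𝕜 := ℂ) _ (cC_bound hα) w).differentiableAt

lemma Ec_ofReal (x : ℝ) : Ec α (x : ℂ) = ((eR α x : ℝ) : ℂ) := by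
  rw [eR, Complex.ofReal_tsum]
  exact tsum_congr fun k => by push_cast; ring

lemma Ec_bound (w : ℂ) : ‖Ec α w‖ ≤ Real.exp (Real.sqrt ‖w‖) :=
  tsum_exp_bound (𝕜 := ℂ) _ (cC_bound hα) w

end coeffs

/-- Factor out finitely many zeros of an entire function. -/
lemma factor (E : ℂ → ℂ) (hE : Differentiable ℂ E) (a : ℕ → ℂ)
    (hinj : Function.Injective a) :
    ∀ n : ℕ, (∀ k, k < n → E (a k) = 0) →
    ∃ H : ℂ → ℂ, Differentiable ℂ H ∧
      ∀ w, E w = (∏ k ∈ Finset.range n, (w - a k)) * H w := by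
  intro n
  induction n with
  | zero => exact fun _ => ⟨E, hE, fun w => by simp⟩
  | succ n ih =>
    intro hz
    obtain ⟨H, hH, hfac⟩ := ih (fun k hk => hz k (Nat.lt_succ_of_lt hk))
    have hHa : H (a n) = 0 := by
      have h0 := hfac (a n)
      rw [hz n (Nat.lt_succ_self n)] at h0
      have hprod : (∏ k ∈ Finset.range n, (a n - a k)) ≠ 0 := by
        refine Finset.prod_ne_zero_iff.mpr fun k hk => ?_
        have hkn : k < n := Finset.mem_range.mp hk
        refine sub_ne_zero.mpr fun hc => ?_
        have := hinj hc
        omega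
      exact (mul_eq_zero.mp h0.symm).resolve_left hprod
    refine ⟨dslope H (a n), ?_, fun w => ?_⟩
    · have := (Complex.differentiableOn_dslope (c := a n)
        (Filter.univ_mem)).mpr hH.differentiableOn
      rw [← differentiableOn_univ]
      exact this
    · have hsub : (w - a n) * dslope H (a n) w = H w := by
        have := sub_smul_dslope H (a n) w
        rw [smul_eq_mul] at this
        rw [this, hHa, sub_zero]
      rw [Finset.prod_range_succ, hfac w, ← hsub]
      ring

end BesselAux


open BesselAux MeasureTheory


set_option maxHeartbeats 2000000 in
/-- `f_{α,m}(λ) = j_α(λ)²/∏_{k=1}^{m+1}(1 - λ²/q_{α,k}²)` extends to an even entire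
function of exponential type `2`, decays like `O(λ^{-2α-2m-3})`, and in particular
`∫_0^∞ λ^{2m} |f_{α,m}(λ)| λ^{2α+1} dλ < ∞`.  Here `q : ℕ → ℝ` enumerates the
positive zeros of `j_α` in increasing order (`q 0 = q_{α,1}`). -/
theorem f_alpha_m_entire (α : ℝ) (hα : α ≥ -1/2) (m : ℕ) (q : ℕ → ℝ)
    (hpos : ∀ k, 0 < q k) (hmono : StrictMono q)
    (hzero : ∀ k, besselJ α (q k) = 0)
    (hall : ∀ x : ℝ, 0 < x → besselJ α x = 0 → ∃ k, x = q k) :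
    ∃ F : ℂ → ℂ, Differentiable ℂ F ∧ (∀ z, F (-z) = F z) ∧
      (∀ ε > 0, ∃ C > 0, ∀ z : ℂ, ‖F z‖ ≤ C * Real.exp ((2 + ε) * ‖z‖)) ∧
      (∀ lam : ℝ, (∏ k ∈ Finset.range (m + 1), (1 - lam ^ 2 / (q k) ^ 2)) ≠ 0 →
        F lam = ((besselJ α lam ^ 2 /
          ∏ k ∈ Finset.range (m + 1), (1 - lam ^ 2 / (q k) ^ 2) : ℝ) : ℂ)) ∧
      (∃ C > 0, ∀ lam : ℝ, 1 ≤ lam →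
        ‖F lam‖ ≤ C * lam ^ (-(2 * α + 2 * (m : ℝ) + 3))) ∧
      MeasureTheory.IntegrableOn
        (fun lam : ℝ => lam ^ (2 * m) * ‖F lam‖ * lam ^ (2 * α + 1)) (Set.Ioi 0) := by
  have hα' : -1/2 ≤ α := hα
  set a : ℕ → ℂ := fun k => (((q k) ^ 2 : ℝ) : ℂ) with hadef
  have ha_ne : ∀ k, a k ≠ 0 := fun k =>
    Complex.ofReal_ne_zero.mpr (pow_ne_zero 2 (hpos k).ne')
  have hainj : Function.Injective a := by
    intro i j hij
    have h1 : ((q i) ^ 2 : ℝ) = (q j) ^ 2 := Complex.ofReal_inj.mp hij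
    have h2 : q i = q j := by nlinarith [hpos i, hpos j]
    exact hmono.injective h2
  have hEzero : ∀ k, Ec α (a k) = 0 := by
    intro k
    rw [hadef]
    simp only
    rw [Ec_ofReal hα', ← besselJ_eq_eR hα', hzero k, Complex.ofReal_zero]
  obtain ⟨H, hHdiff, hfac⟩ := factor (Ec α) (Ec_diff hα') a hainj (m + 1)
    (fun k _ => hEzero k)
  set A : ℂ := (-1) ^ (m + 1) * ∏ k ∈ Finset.range (m + 1), a k with hAdef
  set F : ℂ → ℂ := fun z =>
    A * ((∏ k ∈ Finset.range (m + 1), (z ^ 2 - a k)) * (H (z ^ 2)) ^ 2) with hFdef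
  -- differentiability
  have hFdiff : Differentiable ℂ F := by
    apply Differentiable.const_mul
    apply Differentiable.mul
    · apply Differentiable.fun_finsetProd
      intro k _
      exact (differentiable_pow 2).sub_const (a k)
    · exact ((hHdiff.comp (differentiable_pow 2)).pow 2)
  -- evenness
  have hFeven : ∀ z, F (-z) = F z := by
    intro z
    simp only [hFdef, neg_sq]
  -- Ec on real squares
  have hEc_sq : ∀ lam : ℝ, Ec α (((lam:ℂ)) ^ 2) = ((besselJ α lam : ℝ) : ℂ) := by
    intro lam
    rw [show ((lam:ℂ)) ^ 2 = (((lam ^ 2 : ℝ)) : ℂ) by push_cast; ring,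
      Ec_ofReal hα', ← besselJ_eq_eR hα']
  -- key product identity
  have hprodkey : ∀ z : ℂ, (∏ k ∈ Finset.range (m + 1), (1 - z ^ 2 / a k))
      * ∏ k ∈ Finset.range (m + 1), a k
      = (-1) ^ (m + 1) * ∏ k ∈ Finset.range (m + 1), (z ^ 2 - a k) := by
    intro z
    rw [← Finset.prod_mul_distrib]
    have h1 : ∀ k ∈ Finset.range (m + 1), (1 - z ^ 2 / a k) * a k
        = (-1) * (z ^ 2 - a k) := by
      intro k _
      field_simp [ha_ne k]
      try ring
    rw [Finset.prod_congr rfl h1, Finset.prod_mul_distrib, Finset.prod_const,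
      Finset.card_range]
  -- matching on the real axis
  have hmatch : ∀ lam : ℝ,
      (∏ k ∈ Finset.range (m + 1), (1 - lam ^ 2 / (q k) ^ 2)) ≠ 0 →
      F lam = ((besselJ α lam ^ 2 /
        ∏ k ∈ Finset.range (m + 1), (1 - lam ^ 2 / (q k) ^ 2) : ℝ) : ℂ) := by
    intro lam hD
    set Dr : ℝ := ∏ k ∈ Finset.range (m + 1), (1 - lam ^ 2 / (q k) ^ 2) with hDrdef
    have hDc : ((Dr : ℝ) : ℂ) = ∏ k ∈ Finset.range (m + 1), (1 - (lam:ℂ) ^ 2 / a k) := by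
      rw [hDrdef, Complex.ofReal_prod]
      refine Finset.prod_congr rfl fun k _ => ?_
      rw [hadef]
      push_cast
      ring
    have hDne : ((Dr : ℝ) : ℂ) ≠ 0 := Complex.ofReal_ne_zero.mpr hD
    rw [Complex.ofReal_div, eq_div_iff hDne]
    have hfac2 : (∏ k ∈ Finset.range (m + 1), ((lam:ℂ) ^ 2 - a k)) * H ((lam:ℂ) ^ 2)
        = ((besselJ α lam : ℝ) : ℂ) := by
      rw [← hfac ((lam:ℂ) ^ 2)]
      exact hEc_sq lam
    have hsq : ((-1:ℂ)) ^ (m + 1) * (-1) ^ (m + 1) = 1 := by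
      rw [← pow_add]
      exact Even.neg_one_pow ⟨m + 1, by ring⟩
    calc F lam * ((Dr : ℝ) : ℂ)
        = A * ((∏ k ∈ Finset.range (m + 1), ((lam:ℂ) ^ 2 - a k)) * (H ((lam:ℂ) ^ 2)) ^ 2)
          * ((Dr : ℝ) : ℂ) := by rw [hFdef]
      _ = (-1) ^ (m + 1) *
            ((((Dr : ℝ) : ℂ)) * ∏ k ∈ Finset.range (m + 1), a k)
          * ((∏ k ∈ Finset.range (m + 1), ((lam:ℂ) ^ 2 - a k)) * (H ((lam:ℂ) ^ 2)) ^ 2) := by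
          rw [hAdef]; ring
      _ = (-1) ^ (m + 1) * ((-1) ^ (m + 1) *
            ∏ k ∈ Finset.range (m + 1), ((lam:ℂ) ^ 2 - a k))
          * ((∏ k ∈ Finset.range (m + 1), ((lam:ℂ) ^ 2 - a k)) * (H ((lam:ℂ) ^ 2)) ^ 2) := by
          rw [hDc, hprodkey]
      _ = ((-1:ℂ)) ^ (m + 1) * (-1) ^ (m + 1) *
          ((∏ k ∈ Finset.range (m + 1), ((lam:ℂ) ^ 2 - a k)) * H ((lam:ℂ) ^ 2)) ^ 2 := by
          ring
      _ = ((besselJ α lam : ℝ) : ℂ) ^ 2 := by rw [hsq, hfac2, one_mul]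
      _ = ((besselJ α lam ^ 2 : ℝ) : ℂ) := by push_cast; ring
  -- growth
  have hAnorm : ‖A‖ = ∏ k ∈ Finset.range (m + 1), (q k) ^ 2 := by
    rw [hAdef, norm_mul, norm_pow, norm_neg, norm_one, one_pow, one_mul, norm_prod]
    refine Finset.prod_congr rfl fun k _ => ?_
    rw [hadef]
    simp only
    rw [Complex.norm_real, Real.norm_eq_abs, abs_of_pos (pow_pos (hpos k) 2)]
  set PA : ℝ := ∏ k ∈ Finset.range (m + 1), (q k) ^ 2 with hPAdef
  have hPApos : 0 < PA := Finset.prod_pos fun k _ => pow_pos (hpos k) 2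
  set R0 : ℝ := Real.sqrt (1 + (q m) ^ 2) with hR0def
  obtain ⟨M, hM⟩ := (isCompact_closedBall (0:ℂ) R0).exists_bound_of_continuousOn
    hFdiff.continuous.continuousOn
  have hM0 : 0 ≤ M := le_trans (norm_nonneg (F 0)) (hM 0 (by
    rw [Metric.mem_closedBall, dist_zero_right, norm_zero, hR0def]
    exact Real.sqrt_nonneg _))
  set Cb : ℝ := max M PA + 1 with hCbdef
  have hCbpos : 0 < Cb := by
    have : 0 ≤ max M PA := le_trans hM0 (le_max_left _ _)
    simp only [hCbdef]; linarith
  have hgrowth : ∀ z : ℂ, ‖F z‖ ≤ Cb * Real.exp (2 * ‖z‖) := by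
    intro z
    have hexp1 : (1:ℝ) ≤ Real.exp (2 * ‖z‖) := Real.one_le_exp (by positivity)
    by_cases hcase : ∀ k ∈ Finset.range (m + 1), 1 ≤ ‖z ^ 2 - a k‖
    · -- away from the zeros
      have ht1 : (1:ℝ) ≤ ∏ k ∈ Finset.range (m + 1), ‖z ^ 2 - a k‖ := by
        have := Finset.prod_le_prod (s := Finset.range (m + 1)) (f := fun _ => (1:ℝ))
          (g := fun k => ‖z ^ 2 - a k‖) (fun i _ => zero_le_one) hcase
        simpa using this
      set t : ℝ := ∏ k ∈ Finset.range (m + 1), ‖z ^ 2 - a k‖ with htdef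
      set s : ℝ := ‖H (z ^ 2)‖ with hsdef
      have hEcn : ‖Ec α (z ^ 2)‖ = t * s := by
        rw [hfac (z ^ 2), norm_mul, norm_prod]
      have hEb : ‖Ec α (z ^ 2)‖ ≤ Real.exp ‖z‖ := by
        have := Ec_bound hα' (z ^ 2)
        rwa [norm_pow, Real.sqrt_sq (norm_nonneg z)] at this
      have han : ∀ k, ‖a k‖ = (q k) ^ 2 := fun k => by
        rw [hadef]
        simp only
        rw [Complex.norm_real, Real.norm_eq_abs, abs_of_pos (pow_pos (hpos k) 2)]
      have hFz : ‖F z‖ = PA * (t * s ^ 2) := by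
        simp only [hFdef, hAdef, norm_mul, norm_prod, norm_pow, norm_neg, norm_one,
          one_pow, one_mul, han]
        rfl
      rw [hFz]
      have h1 : t * s ^ 2 ≤ (t * s) ^ 2 := by
        nlinarith [mul_nonneg (sub_nonneg.mpr ht1) (sq_nonneg s)]
      have h2 : (t * s) ^ 2 ≤ Real.exp ‖z‖ ^ 2 := by
        have hts : 0 ≤ t * s := mul_nonneg (by linarith) (norm_nonneg _)
        have := hEcn ▸ hEb
        nlinarith
      have h3 : Real.exp ‖z‖ ^ 2 = Real.exp (2 * ‖z‖) := by
        rw [← Real.exp_nat_mul]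
        norm_num
      calc PA * (t * s ^ 2) ≤ PA * Real.exp (2 * ‖z‖) := by
            rw [← h3]
            exact mul_le_mul_of_nonneg_left (le_trans h1 h2) hPApos.le
        _ ≤ Cb * Real.exp (2 * ‖z‖) := by
            refine mul_le_mul_of_nonneg_right ?_ (Real.exp_pos _).le
            simp only [hCbdef]
            have := le_max_right M PA
            linarith
    · -- close to a zero: bounded region
      push_neg at hcase
      obtain ⟨k, hk, hk1⟩ := hcase
      have hkm : k ≤ m := by
        have := Finset.mem_range.mp hk; omega
      have hqk : q k ≤ q m := hmono.monotone hkm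
      have hz2 : ‖z‖ ^ 2 ≤ 1 + (q m) ^ 2 := by
        have h1 : ‖z ^ 2‖ ≤ ‖z ^ 2 - a k‖ + ‖a k‖ := by
          have := norm_add_le (z ^ 2 - a k) (a k)
          rwa [sub_add_cancel] at this
        have h2 : ‖a k‖ = (q k) ^ 2 := by
          rw [hadef]
          simp only
          rw [Complex.norm_real, Real.norm_eq_abs, abs_of_pos (pow_pos (hpos k) 2)]
        rw [norm_pow] at h1
        have h3 : (q k) ^ 2 ≤ (q m) ^ 2 := by nlinarith [hpos k, hpos m]
        rw [h2] at h1
        linarith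
      have hzR0 : z ∈ Metric.closedBall (0:ℂ) R0 := by
        rw [Metric.mem_closedBall, dist_zero_right, hR0def]
        rw [show ‖z‖ = Real.sqrt (‖z‖ ^ 2) by rw [Real.sqrt_sq (norm_nonneg z)]]
        exact Real.sqrt_le_sqrt hz2
      calc ‖F z‖ ≤ M := hM z hzR0
        _ ≤ Cb := by
            simp only [hCbdef]
            have := le_max_left M PA
            linarith
        _ ≤ Cb * Real.exp (2 * ‖z‖) := le_mul_of_one_le_right hCbpos.le hexp1
  have hgrowth' : ∀ ε > 0, ∃ C > 0, ∀ z : ℂ, ‖F z‖ ≤ C * Real.exp ((2 + ε) * ‖z‖) := by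
    intro ε hε
    refine ⟨Cb, hCbpos, fun z => le_trans (hgrowth z) ?_⟩
    refine mul_le_mul_of_nonneg_left (Real.exp_le_exp.mpr ?_) hCbpos.le
    nlinarith [norm_nonneg z]
  -- decay
  obtain ⟨K, hKpos, hdec⟩ := eR_decay hα'
  set T : ℝ := Real.sqrt 2 * q m + 1 with hTdef
  have hsqrt2 : (0:ℝ) ≤ Real.sqrt 2 := Real.sqrt_nonneg 2
  have hT1 : (1:ℝ) ≤ T := by
    have : 0 ≤ Real.sqrt 2 * q m := mul_nonneg hsqrt2 (hpos m).le
    simp only [hTdef]; linarith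
  have hTpos : (0:ℝ) < T := lt_of_lt_of_le one_pos hT1
  set sE : ℝ := 2 * α + 2 * (m:ℝ) + 3 with hsEdef
  have hsE0 : 0 ≤ sE := by
    have : (0:ℝ) ≤ (m:ℝ) := Nat.cast_nonneg m
    simp only [hsEdef]; linarith
  set PB : ℝ := ∏ k ∈ Finset.range (m + 1), (2 * (q k) ^ 2) with hPBdef
  have hPBpos : 0 < PB := Finset.prod_pos fun k _ => by nlinarith [hpos k]
  -- decay for lam ≥ T
  have hdecT : ∀ lam : ℝ, T ≤ lam → ‖F lam‖ ≤ K ^ 2 * PB * lam ^ (-sE) := by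
    intro lam hTlam
    have hlam1 : (1:ℝ) ≤ lam := le_trans hT1 hTlam
    have hlam0 : (0:ℝ) < lam := lt_of_lt_of_le one_pos hlam1
    have hlam_sq : ∀ k, k ≤ m → lam ^ 2 / 2 ≤ lam ^ 2 - (q k) ^ 2 := by
      intro k hk
      have hq : q k ≤ q m := hmono.monotone hk
      have h2 : Real.sqrt 2 * q m ≤ lam := by
        simp only [hTdef] at hTlam; linarith
      have h3 : (Real.sqrt 2 * q m) ^ 2 ≤ lam ^ 2 := by
        nlinarith [mul_nonneg hsqrt2 (hpos m).le]
      have h4 : (Real.sqrt 2) ^ 2 = 2 := Real.sq_sqrt (by norm_num)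
      have h5 : 2 * (q m) ^ 2 ≤ lam ^ 2 := by nlinarith
      nlinarith [hpos k, hpos m]
    set Dr : ℝ := ∏ k ∈ Finset.range (m + 1), (1 - lam ^ 2 / (q k) ^ 2) with hDrdef
    have habs_f : ∀ k ∈ Finset.range (m + 1),
        lam ^ 2 / (2 * (q k) ^ 2) ≤ |1 - lam ^ 2 / (q k) ^ 2| := by
      intro k hk
      have hkm : k ≤ m := by have := Finset.mem_range.mp hk; omega
      have hq2 : (0:ℝ) < (q k) ^ 2 := pow_pos (hpos k) 2
      have h6 := hlam_sq k hkm
      have hneg : 1 - lam ^ 2 / (q k) ^ 2 ≤ 0 := by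
        rw [sub_nonpos, le_div_iff₀ hq2]
        nlinarith [hlam0]
      rw [abs_of_nonpos hneg]
      rw [show lam ^ 2 / (2 * (q k) ^ 2) = lam ^ 2 / 2 / (q k) ^ 2 by rw [div_div]]
      rw [show -(1 - lam ^ 2 / (q k) ^ 2) = (lam ^ 2 - (q k) ^ 2) / (q k) ^ 2 by
        rw [neg_sub, sub_div, div_self hq2.ne']]
      gcongr
    have hDabs : |Dr| = ∏ k ∈ Finset.range (m + 1), |1 - lam ^ 2 / (q k) ^ 2| := by
      rw [hDrdef, Finset.abs_prod]
    have hDr_lb : ((lam ^ 2) ^ (m + 1)) / PB ≤ |Dr| := by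
      rw [hDabs]
      have h7 : (∏ k ∈ Finset.range (m + 1), (lam ^ 2 / (2 * (q k) ^ 2)))
          ≤ ∏ k ∈ Finset.range (m + 1), |1 - lam ^ 2 / (q k) ^ 2| :=
        Finset.prod_le_prod (fun k _ => by positivity) habs_f
      have h8 : (∏ k ∈ Finset.range (m + 1), (lam ^ 2 / (2 * (q k) ^ 2)))
          = ((lam ^ 2) ^ (m + 1)) / PB := by
        rw [Finset.prod_div_distrib, Finset.prod_const, Finset.card_range, hPBdef]
      linarith [h8 ▸ h7]
    have hDr_pos : 0 < |Dr| :=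
      lt_of_lt_of_le (by positivity) hDr_lb
    have hDne : Dr ≠ 0 := fun h => by rw [h, abs_zero] at hDr_pos; exact lt_irrefl 0 hDr_pos
    have hFm := hmatch lam (hDrdef ▸ hDne)
    have hFnorm : ‖F lam‖ = (besselJ α lam) ^ 2 / |Dr| := by
      rw [hFm, Complex.norm_real, Real.norm_eq_abs, abs_div, ← hDrdef, abs_pow, sq_abs]
    have hb := hdec lam hlam1
    rw [← besselJ_eq_eR hα' lam] at hb
    have hnum : (besselJ α lam) ^ 2 ≤ (K * lam ^ (-(α + 1/2))) ^ 2 := by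
      rw [← sq_abs]
      exact pow_le_pow_left₀ (abs_nonneg _) hb 2
    have hmain : ‖F lam‖ ≤ (K * lam ^ (-(α + 1/2))) ^ 2 / (((lam ^ 2) ^ (m + 1)) / PB) := by
      rw [hFnorm]
      exact div_le_div₀ (by positivity) hnum (by positivity) hDr_lb
    refine le_trans hmain (le_of_eq ?_)
    have eA : (lam ^ (-(α + 1/2))) ^ 2 = lam ^ ((-(α + 1/2)) * 2) := by
      rw [← Real.rpow_natCast (lam ^ (-(α + 1/2))) 2, ← Real.rpow_mul hlam0.le]
      norm_num
    have eB : ((lam ^ 2 : ℝ)) ^ (m + 1) = lam ^ (2 * (m:ℝ) + 2) := by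
      rw [← pow_mul, ← Real.rpow_natCast lam (2 * (m + 1))]
      congr 1
      push_cast; ring
    have eC : lam ^ ((-(α + 1/2)) * 2) / lam ^ (2 * (m:ℝ) + 2) = lam ^ (-sE) := by
      rw [← Real.rpow_sub hlam0]
      congr 1
      simp only [hsEdef]; ring
    calc (K * lam ^ (-(α + 1/2))) ^ 2 / (((lam ^ 2) ^ (m + 1)) / PB)
        = K ^ 2 * PB * (lam ^ ((-(α + 1/2)) * 2) / lam ^ (2 * (m:ℝ) + 2)) := by
          rw [eB, mul_pow, eA, div_div_eq_mul_div]
          ring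
      _ = K ^ 2 * PB * lam ^ (-sE) := by rw [eC]
  -- full decay statement
  have hdecay : ∃ C, 0 < C ∧ ∀ lam : ℝ, 1 ≤ lam → ‖F lam‖ ≤ C * lam ^ (-sE) := by
    set C2 : ℝ := Cb * Real.exp (2 * T) * T ^ sE with hC2def
    have hC2pos : 0 < C2 := by
      have := Real.rpow_pos_of_pos hTpos sE
      have := Real.exp_pos (2 * T)
      simp only [hC2def]
      positivity
    refine ⟨max (K ^ 2 * PB) C2 + 1, by positivity, fun lam hlam1 => ?_⟩
    have hlam0 : (0:ℝ) < lam := lt_of_lt_of_le one_pos hlam1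
    have hrpnn : 0 ≤ lam ^ (-sE) := Real.rpow_nonneg hlam0.le _
    by_cases hc : T ≤ lam
    · refine le_trans (hdecT lam hc) (mul_le_mul_of_nonneg_right ?_ hrpnn)
      have := le_max_left (K ^ 2 * PB) C2
      linarith
    · push_neg at hc
      have hnormc : ‖((lam:ℝ) : ℂ)‖ = lam := by
        rw [Complex.norm_real, Real.norm_eq_abs, abs_of_pos hlam0]
      have h1 : ‖F lam‖ ≤ Cb * Real.exp (2 * T) := by
        refine le_trans (hgrowth lam) (mul_le_mul_of_nonneg_left ?_ hCbpos.le)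
        rw [hnormc]
        exact Real.exp_le_exp.mpr (by linarith)
      have h2 : T ^ (-sE) ≤ lam ^ (-sE) := by
        rw [Real.rpow_neg hTpos.le, Real.rpow_neg hlam0.le]
        exact inv_anti₀ (Real.rpow_pos_of_pos hlam0 sE)
          (Real.rpow_le_rpow hlam0.le hc.le hsE0)
      have h3 : Cb * Real.exp (2 * T) = C2 * T ^ (-sE) := by
        rw [hC2def, mul_assoc, ← Real.rpow_add hTpos, add_neg_cancel, Real.rpow_zero, mul_one]
      calc ‖F lam‖ ≤ Cb * Real.exp (2 * T) := h1
        _ = C2 * T ^ (-sE) := h3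
        _ ≤ C2 * lam ^ (-sE) := mul_le_mul_of_nonneg_left h2 hC2pos.le
        _ ≤ (max (K ^ 2 * PB) C2 + 1) * lam ^ (-sE) := by
            refine mul_le_mul_of_nonneg_right ?_ hrpnn
            have := le_max_right (K ^ 2 * PB) C2
            linarith
  obtain ⟨Cd, hCdpos, hCd⟩ := hdecay
  -- integrability
  have hcont : Continuous fun lam : ℝ => ‖F ((lam:ℝ) : ℂ)‖ :=
    (hFdiff.continuous.comp Complex.continuous_ofReal).norm
  have hcontOn : ContinuousOn
      (fun lam : ℝ => lam ^ (2 * m) * ‖F ((lam:ℝ) : ℂ)‖ * lam ^ (2 * α + 1))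
      (Set.Ioi (0:ℝ)) := by
    intro x hx
    have h1 : ContinuousAt (fun lam : ℝ => lam ^ (2 * α + 1)) x :=
      Real.continuousAt_rpow_const x _ (Or.inl (ne_of_gt (Set.mem_Ioi.mp hx)))
    exact (((continuous_pow (2 * m)).continuousAt.mul hcont.continuousAt).mul
      h1).continuousWithinAt
  have hint1 : MeasureTheory.IntegrableOn
      (fun lam : ℝ => lam ^ (2 * m) * ‖F ((lam:ℝ) : ℂ)‖ * lam ^ (2 * α + 1))
      (Set.Ioc (0:ℝ) 1) := by
    have hg : MeasureTheory.IntegrableOn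
        (fun lam : ℝ => (Cb * Real.exp 2) * lam ^ (2 * α + 1)) (Set.Ioc (0:ℝ) 1) := by
      have hbase := intervalIntegral.intervalIntegrable_rpow' (a := 0) (b := 1)
        (r := 2 * α + 1) (by linarith)
      rw [intervalIntegrable_iff, Set.uIoc_of_le zero_le_one] at hbase
      exact hbase.const_mul _
    refine MeasureTheory.Integrable.mono' hg
      ((hcontOn.mono (Set.Ioc_subset_Ioi_self)).aestronglyMeasurable measurableSet_Ioc) ?_
    rw [MeasureTheory.ae_restrict_iff' measurableSet_Ioc]
    refine Filter.Eventually.of_forall fun x hx => ?_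
    obtain ⟨hx0, hx1⟩ := hx
    have hFb : ‖F ((x:ℝ) : ℂ)‖ ≤ Cb * Real.exp 2 := by
      refine le_trans (hgrowth x) (mul_le_mul_of_nonneg_left ?_ hCbpos.le)
      refine Real.exp_le_exp.mpr ?_
      rw [Complex.norm_real, Real.norm_eq_abs, abs_of_pos hx0]
      linarith
    have hnn : 0 ≤ x ^ (2 * m) * ‖F ((x:ℝ) : ℂ)‖ * x ^ (2 * α + 1) := by
      have := Real.rpow_nonneg hx0.le (2 * α + 1)
      positivity
    rw [Real.norm_eq_abs, abs_of_nonneg hnn]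
    calc x ^ (2 * m) * ‖F ((x:ℝ) : ℂ)‖ * x ^ (2 * α + 1)
        ≤ 1 * (Cb * Real.exp 2) * x ^ (2 * α + 1) := by
          refine mul_le_mul_of_nonneg_right ?_ (Real.rpow_nonneg hx0.le _)
          refine mul_le_mul (pow_le_one₀ hx0.le hx1) hFb (norm_nonneg _) zero_le_one
      _ = (Cb * Real.exp 2) * x ^ (2 * α + 1) := by ring
  have hint2 : MeasureTheory.IntegrableOn
      (fun lam : ℝ => lam ^ (2 * m) * ‖F ((lam:ℝ) : ℂ)‖ * lam ^ (2 * α + 1))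
      (Set.Ioi (1:ℝ)) := by
    have hg : MeasureTheory.IntegrableOn
        (fun lam : ℝ => Cd * lam ^ ((-2 : ℝ))) (Set.Ioi (1:ℝ)) :=
      (integrableOn_Ioi_rpow_of_lt (by norm_num) one_pos).const_mul _
    refine MeasureTheory.Integrable.mono' hg
      ((hcontOn.mono (t := Set.Ioi (1:ℝ)) (fun x hx => Set.mem_Ioi.mpr (lt_trans one_pos (Set.mem_Ioi.mp hx)))).aestronglyMeasurable
        measurableSet_Ioi) ?_
    rw [MeasureTheory.ae_restrict_iff' measurableSet_Ioi]
    refine Filter.Eventually.of_forall fun x hx => ?_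
    have hx1 : (1:ℝ) ≤ x := le_of_lt (Set.mem_Ioi.mp hx)
    have hx0 : (0:ℝ) < x := lt_of_lt_of_le one_pos hx1
    have hnn : 0 ≤ x ^ (2 * m) * ‖F ((x:ℝ) : ℂ)‖ * x ^ (2 * α + 1) := by
      have := Real.rpow_nonneg hx0.le (2 * α + 1)
      positivity
    rw [Real.norm_eq_abs, abs_of_nonneg hnn]
    have e1 : (x:ℝ) ^ (2 * m) = x ^ ((2 * (m:ℝ) : ℝ)) := by
      rw [← Real.rpow_natCast x (2 * m)]
      congr 1
      push_cast; ring
    have e2 : x ^ ((2 * (m:ℝ) : ℝ)) * x ^ (-sE) * x ^ (2 * α + 1) = x ^ ((-2 : ℝ)) := by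
      rw [← Real.rpow_add hx0, ← Real.rpow_add hx0]
      congr 1
      simp only [hsEdef]; ring
    calc x ^ (2 * m) * ‖F ((x:ℝ) : ℂ)‖ * x ^ (2 * α + 1)
        ≤ x ^ (2 * m) * (Cd * x ^ (-sE)) * x ^ (2 * α + 1) := by
          refine mul_le_mul_of_nonneg_right
            (mul_le_mul_of_nonneg_left (hCd x hx1) (by positivity))
            (Real.rpow_nonneg hx0.le _)
      _ = Cd * (x ^ ((2 * (m:ℝ) : ℝ)) * x ^ (-sE) * x ^ (2 * α + 1)) := by
          rw [e1]; ring
      _ = Cd * x ^ ((-2 : ℝ)) := by rw [e2]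
  have hint : MeasureTheory.IntegrableOn
      (fun lam : ℝ => lam ^ (2 * m) * ‖F ((lam:ℝ) : ℂ)‖ * lam ^ (2 * α + 1))
      (Set.Ioi (0:ℝ)) := by
    rw [← Set.Ioc_union_Ioi_eq_Ioi (zero_le_one : (0:ℝ) ≤ 1)]
    exact hint1.union hint2
  exact ⟨F, hFdiff, hFeven, hgrowth', hmatch,
    ⟨Cd, hCdpos, fun lam hlam => hCd lam hlam⟩, hint⟩
end
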